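/- arXiv:2204.00146 — 6 statements merged into one kernel-verified Lean document; each statement's English description precedes it below -/
import Mathlib

section
/- Let $E$ be a complex Banach lattice, $u \ge 0$ a quasi-interior point of $E$, and $A$ a closed linear operator on $E$ with domain contained in the principal ideal $E_u$. If $\lambda_0 \in \mathbb{C}$ lies in the resolvent set of $A$, then $(\lambda - \lambda_0) R(\lambda, A) \to 0$ in the operator norm of $\mathcal{L}(E, E_u)$ as $\lambda \to \lambda_0$, where $E_u$ carries the gauge norm $\|x\|_u = \inf\{c > 0 : |x| \le c u\}$. -/
open Filter Topology
set_option linter.unusedSectionVars false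
set_option linter.unusedVariables false
set_option linter.unnecessarySimpa false

/-- Membership in the principal ideal `E_u` generated by `u`. -/
def InPrincipalIdeal {E : Type*} [NormedAddCommGroup E] [Lattice E] [HasSolidNorm E] [IsOrderedAddMonoid E] [NormedSpace ℝ E]
    (u x : E) : Prop :=
  ∃ c : ℝ, 0 < c ∧ |x| ≤ c • u

/-- The gauge norm on the principal ideal `E_u`. -/
noncomputable def gaugeNorm {E : Type*} [NormedAddCommGroup E] [Lattice E] [HasSolidNorm E] [IsOrderedAddMonoid E] [NormedSpace ℝ E]
    (u x : E) : ℝ :=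
  sInf {c : ℝ | 0 < c ∧ |x| ≤ c • u}

/-- `R` is the resolvent of the (unbounded) operator `A` at `lam`,
i.e. `R = (lam - A)⁻¹`. -/
def IsResolventAt {E : Type*} [NormedAddCommGroup E] [Lattice E] [HasSolidNorm E] [IsOrderedAddMonoid E] [NormedSpace ℝ E]
    (A : E →ₗ.[ℝ] E) (lam : ℝ) (R : E →L[ℝ] E) : Prop :=
  (∀ x : A.domain, R (lam • (x : E) - A x) = x) ∧
  (∀ f : E, ∃ h : R f ∈ A.domain, lam • R f - A ⟨R f, h⟩ = f)



section helpers
variable {E : Type*} [NormedAddCommGroup E] [Lattice E] [HasSolidNorm E] [IsOrderedAddMonoid E] [NormedSpace ℝ E]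

lemma aux_pow_two_cancel {x : E} (k : ℕ) (h : 0 ≤ (2 ^ k) • x) : 0 ≤ x := by
  induction k generalizing x with
  | zero => simpa using h
  | succ k ih =>
    rw [pow_succ, mul_smul] at h
    exact nsmul_two_semiclosed (ih h)

lemma aux_real_smul_nonneg {t : ℝ} {u : E} (ht : 0 ≤ t) (hu : 0 ≤ u) : 0 ≤ t • u := by
  have hnat : ∀ n : ℕ, (0 : E) ≤ (n : ℝ) • u := by
    intro n; rw [Nat.cast_smul_eq_nsmul]; exact nsmul_nonneg hu n
  have hdy : ∀ k : ℕ, (0 : E) ≤ ((⌊t * 2 ^ k⌋₊ : ℝ) / 2 ^ k) • u := by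
    intro k
    apply aux_pow_two_cancel k
    have : ((2 : ℕ) ^ k) • (((⌊t * 2 ^ k⌋₊ : ℝ) / 2 ^ k) • u)
        = ((⌊t * 2 ^ k⌋₊ : ℝ)) • u := by
      rw [← Nat.cast_smul_eq_nsmul ℝ, smul_smul]
      congr 1
      push_cast
      field_simp
    rw [this]; exact hnat _
  have hlim : Tendsto (fun k : ℕ => ((⌊t * 2 ^ k⌋₊ : ℝ) / 2 ^ k)) atTop (𝓝 t) := by
    have hle : ∀ k : ℕ, ((⌊t * 2 ^ k⌋₊ : ℝ) / 2 ^ k) ≤ t := by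
      intro k
      rw [div_le_iff₀ (by positivity)]
      exact Nat.floor_le (by positivity)
    have hge : ∀ k : ℕ, t - ((2:ℝ)⁻¹) ^ k ≤ ((⌊t * 2 ^ k⌋₊ : ℝ) / 2 ^ k) := by
      intro k
      have h2 : (0:ℝ) < 2 ^ k := by positivity
      rw [le_div_iff₀ h2]
      have h2' : ((2:ℝ)⁻¹) ^ k * 2 ^ k = 1 := by rw [← mul_pow]; norm_num
      nlinarith [Nat.lt_floor_add_one (t * 2 ^ k)]
    have h1 : Tendsto (fun k : ℕ => t - ((2:ℝ)⁻¹) ^ k) atTop (𝓝 t) := by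
      have := tendsto_pow_atTop_nhds_zero_of_abs_lt_one (r := (2:ℝ)⁻¹)
        (by rw [abs_of_nonneg (by norm_num)]; norm_num)
      simpa using tendsto_const_nhds.sub this
    exact tendsto_of_tendsto_of_tendsto_of_le_of_le h1 tendsto_const_nhds hge hle
  exact isClosed_Ici.mem_of_tendsto (hlim.smul_const u) (Filter.Eventually.of_forall hdy)

lemma aux_smul_mono {t : ℝ} (ht : 0 ≤ t) {x y : E} (h : x ≤ y) : t • x ≤ t • y := by
  have := aux_real_smul_nonneg ht (sub_nonneg.2 h)
  rw [smul_sub] at this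
  exact sub_nonneg.1 this

lemma aux_coeff_mono {s t : ℝ} (h : s ≤ t) {u : E} (hu : 0 ≤ u) : s • u ≤ t • u := by
  have := aux_real_smul_nonneg (sub_nonneg.2 h) hu
  rw [sub_smul] at this
  exact sub_nonneg.1 this

lemma aux_abs_smul_nonneg {t : ℝ} (ht : 0 ≤ t) (x : E) : |t • x| = t • |x| := by
  rcases eq_or_lt_of_le ht with h0 | h0
  · simp [← h0]
  refine le_antisymm ?_ ?_
  · refine abs_le'.2 ⟨aux_smul_mono ht (le_abs_self x), ?_⟩
    rw [← smul_neg]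
    exact aux_smul_mono ht (neg_le_abs x)
  · have hx : |x| ≤ t⁻¹ • |t • x| := by
      refine abs_le'.2 ⟨?_, ?_⟩
      · have : x = t⁻¹ • (t • x) := by
          rw [smul_smul, inv_mul_cancel₀ h0.ne', one_smul]
        conv_lhs => rw [this]
        exact aux_smul_mono (inv_nonneg.2 ht) (le_abs_self _)
      · have : -x = t⁻¹ • (-(t • x)) := by
          rw [smul_neg, smul_smul, inv_mul_cancel₀ h0.ne', one_smul]
        conv_lhs => rw [this]
        exact aux_smul_mono (inv_nonneg.2 ht) (neg_le_abs _)
    calc t • |x| ≤ t • (t⁻¹ • |t • x|) := aux_smul_mono ht hx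
      _ = |t • x| := by rw [smul_smul, mul_inv_cancel₀ h0.ne', one_smul]

lemma aux_abs_smul (t : ℝ) (x : E) : |t • x| = |t| • |x| := by
  rcases le_or_gt 0 t with ht | ht
  · rw [abs_of_nonneg ht, aux_abs_smul_nonneg ht]
  · have h1 : t • x = (-t) • (-x) := by rw [neg_smul, smul_neg, neg_neg]
    rw [h1, aux_abs_smul_nonneg (by linarith), abs_neg, abs_of_neg ht]

lemma aux_gaugeNorm_le {u x : E} {c : ℝ} (hc : 0 < c) (h : |x| ≤ c • u) :
    gaugeNorm u x ≤ c :=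
  csInf_le ⟨0, fun d hd => le_of_lt hd.1⟩ ⟨hc, h⟩

lemma aux_gaugeNorm_zero {u : E} (hu : 0 ≤ u) : gaugeNorm u (0 : E) = 0 := by
  have : {c : ℝ | 0 < c ∧ |(0:E)| ≤ c • u} = Set.Ioi 0 := by
    ext c
    simp only [Set.mem_setOf_eq, abs_zero, Set.mem_Ioi]
    exact ⟨fun h => h.1, fun h => ⟨h, aux_real_smul_nonneg h.le hu⟩⟩
  rw [gaugeNorm, this, csInf_Ioi]

end helpers

lemma aux_exists_bound {E : Type*} [NormedAddCommGroup E] [Lattice E] [HasSolidNorm E] [IsOrderedAddMonoid E] [NormedSpace ℝ E]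
    [CompleteSpace E] (u : E) (hu : 0 ≤ u) (R0 : E →L[ℝ] E)
    (hrange : ∀ f : E, ∃ c : ℝ, 0 < c ∧ |R0 f| ≤ c • u) :
    ∃ M : ℝ, 0 < M ∧ ∀ f : E, |R0 f| ≤ (M * ‖f‖) • u := by
  set C : ℕ → Set E := fun n => {f | R0 f ≤ (n : ℝ) • u ∧ -(R0 f) ≤ (n : ℝ) • u} with hC
  have hclosed : ∀ n, IsClosed (C n) := fun n =>
    (isClosed_le R0.continuous continuous_const).inter
      (isClosed_le R0.continuous.neg continuous_const)
  have habs : ∀ (n : ℕ) (f : E), f ∈ C n ↔ |R0 f| ≤ (n : ℝ) • u := by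
    intro n f; rw [abs_le']; exact Iff.rfl
  have hcover : (⋃ n, C n) = Set.univ := by
    apply Set.eq_univ_of_forall
    intro f
    obtain ⟨c, hc, hcu⟩ := hrange f
    exact Set.mem_iUnion.2 ⟨⌈c⌉₊, (habs _ _).2 (hcu.trans (aux_coeff_mono (Nat.le_ceil c) hu))⟩
  obtain ⟨n, hn⟩ := nonempty_interior_of_iUnion_of_closed hclosed hcover
  obtain ⟨f0, hf0⟩ := hn
  obtain ⟨r, hr, hball⟩ := Metric.isOpen_iff.1 isOpen_interior f0 hf0
  have hball' : Metric.ball f0 r ⊆ C n := hball.trans interior_subset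
  have hsmall : ∀ g : E, ‖g‖ < r → |R0 g| ≤ ((2 * n : ℕ) : ℝ) • u := by
    intro g hg
    have h1 : f0 + g ∈ C n := hball' (by
      rw [Metric.mem_ball, dist_eq_norm]
      simpa using hg)
    have h2 : f0 ∈ C n := hball' (Metric.mem_ball_self hr)
    have h1' := (habs n (f0 + g)).1 h1
    have h2' := (habs n f0).1 h2
    have heq : R0 g = R0 (f0 + g) - R0 f0 := by rw [map_add]; abel
    calc |R0 g| = |R0 (f0 + g) + -(R0 f0)| := by rw [heq, sub_eq_add_neg]
      _ ≤ |R0 (f0 + g)| + |R0 f0| := by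
          refine (abs_add_le _ _).trans ?_
          rw [abs_neg]
      _ ≤ (n : ℝ) • u + (n : ℝ) • u := add_le_add h1' h2'
      _ = ((2 * n : ℕ) : ℝ) • u := by rw [← add_smul]; congr 1; push_cast; ring
  refine ⟨(4 * (n + 1)) / r, by positivity, ?_⟩
  intro f
  rcases eq_or_ne f 0 with rfl | hf
  · simp
  have hfn : 0 < ‖f‖ := norm_pos_iff.2 hf
  set s : ℝ := r / (2 * ‖f‖) with hs
  have hs0 : 0 < s := by positivity
  have hsg : ‖s • f‖ < r := by
    rw [norm_smul, Real.norm_eq_abs, abs_of_pos hs0, hs]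
    rw [div_mul_eq_mul_div, mul_comm]
    rw [div_lt_iff₀ (by positivity)]
    nlinarith
  have key := hsmall (s • f) hsg
  rw [map_smul, aux_abs_smul_nonneg hs0.le] at key
  have key2 : s⁻¹ • (s • |R0 f|) ≤ s⁻¹ • (((2 * n : ℕ) : ℝ) • u) :=
    aux_smul_mono (inv_nonneg.2 hs0.le) key
  rw [smul_smul, inv_mul_cancel₀ hs0.ne', one_smul, smul_smul] at key2
  refine key2.trans (aux_coeff_mono ?_ hu)
  have hsinv : s⁻¹ = 2 * ‖f‖ / r := by rw [hs]; field_simp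
  rw [hsinv]
  push_cast
  rw [div_mul_eq_mul_div, div_mul_eq_mul_div, div_le_div_iff₀ hr hr]
  nlinarith [mul_pos hr hfn, (Nat.cast_nonneg n : (0:ℝ) ≤ (n:ℝ))]

/-- Lemma 2.3(i): if `dom A ⊆ E_u` and `lam0 ∈ ρ(A)`, then
`(lam - lam0) R(lam, A) → 0` in the operator norm of `L(E, E_u)` as `lam → lam0`. -/
theorem stmt0 {E : Type*} [NormedAddCommGroup E] [Lattice E] [HasSolidNorm E] [IsOrderedAddMonoid E] [NormedSpace ℝ E] [CompleteSpace E]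
    (u : E) (hu : 0 ≤ u) (huq : Dense {x : E | InPrincipalIdeal u x})
    (A : E →ₗ.[ℝ] E) (hclosed : IsClosed (A.graph : Set (E × E)))
    (hdom : ∀ x ∈ A.domain, InPrincipalIdeal u x)
    (ρ : Set ℝ) (R : ℝ → E →L[ℝ] E)
    (hR : ∀ lam ∈ ρ, IsResolventAt A lam (R lam))
    (hρmax : ∀ lam : ℝ, (∃ S : E →L[ℝ] E, IsResolventAt A lam S) → lam ∈ ρ)
    (lam0 : ℝ) (h0 : lam0 ∈ ρ) :
    ∀ ε > 0, ∀ᶠ lam in 𝓝 lam0, lam ∈ ρ ∧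
      ∀ f : E, gaugeNorm u ((lam - lam0) • R lam f) ≤ ε * ‖f‖ := by
  intro ε hε
  obtain ⟨P1, P2⟩ := hR lam0 h0
  have hrange : ∀ f : E, ∃ c : ℝ, 0 < c ∧ |R lam0 f| ≤ c • u := by
    intro f
    obtain ⟨hm, -⟩ := P2 f
    exact hdom _ hm
  obtain ⟨M, hM, hMb⟩ := aux_exists_bound u hu (R lam0) hrange
  set K := ‖R lam0‖ with hK
  have hKnn : (0:ℝ) ≤ K := norm_nonneg _
  set δ : ℝ := min (ε / (2 * M)) (1 / (2 * (K + 1))) with hδdef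
  have hδ : 0 < δ := lt_min (by positivity) (by positivity)
  filter_upwards [Metric.ball_mem_nhds lam0 hδ] with lam hlam
  rw [Metric.mem_ball, Real.dist_eq] at hlam
  set t : E →L[ℝ] E := (lam0 - lam) • R lam0 with htdef
  have htn : ‖t‖ ≤ 1/2 := by
    rw [htdef]
    refine (norm_smul_le (lam0 - lam) (R lam0)).trans ?_
    rw [Real.norm_eq_abs, abs_sub_comm]
    have h1 : |lam - lam0| ≤ 1/(2*(K+1)) := le_of_lt (hlam.trans_le (min_le_right _ _))
    have h2 : |lam - lam0| * K ≤ (1/(2*(K+1))) * (K+1) :=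
      mul_le_mul h1 (by linarith) hKnn (by positivity)
    have h3 : (1/(2*(K+1))) * (K+1) = 1/2 := by field_simp
    rw [h3] at h2
    exact h2
  have ht1 : ‖t‖ < 1 := htn.trans_lt (by norm_num)
  set W := Units.oneSub t ht1 with hWdef
  set V : E →L[ℝ] E := ↑W⁻¹ with hVdef
  have hV2 : ‖V‖ ≤ 2 := by
    have hVsum : V = ∑' n : ℕ, t ^ n := rfl
    rw [hVsum]
    refine (tsum_geometric_le_of_norm_lt_one t ht1).trans ?_
    have h1 : ‖(1 : E →L[ℝ] E)‖ ≤ 1 := by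
      rw [ContinuousLinearMap.one_def]
      exact ContinuousLinearMap.norm_id_le
    have h2 : (1 - ‖t‖)⁻¹ ≤ 2 := by
      have hle : (1:ℝ)/2 ≤ 1 - ‖t‖ := by linarith
      calc (1 - ‖t‖)⁻¹ ≤ ((1:ℝ)/2)⁻¹ := by
            apply inv_anti₀ (by norm_num) hle
        _ = 2 := by norm_num
    linarith
  have hWV : ∀ f : E, V f - (lam0 - lam) • R lam0 (V f) = f := by
    intro f
    have h : ((1 : E →L[ℝ] E) - t) * V = 1 := by
      have := W.mul_inv
      rw [hWdef] at this
      simpa [hVdef, hWdef] using this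
    have h2 := congrArg (fun (T : E →L[ℝ] E) => T f) h
    simpa [ContinuousLinearMap.mul_apply, ContinuousLinearMap.sub_apply,
      ContinuousLinearMap.smul_apply, ContinuousLinearMap.one_apply, htdef] using h2
  have hVW : ∀ f : E, V (f - (lam0 - lam) • R lam0 f) = f := by
    intro f
    have h : V * ((1 : E →L[ℝ] E) - t) = 1 := by
      have := W.inv_mul
      rw [hWdef] at this
      simpa [hVdef, hWdef] using this
    have h2 := congrArg (fun (T : E →L[ℝ] E) => T f) h
    simpa [ContinuousLinearMap.mul_apply, ContinuousLinearMap.sub_apply,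
      ContinuousLinearMap.smul_apply, ContinuousLinearMap.one_apply, htdef] using h2
  set S : E →L[ℝ] E := (R lam0).comp V with hSdef
  have hS : IsResolventAt A lam S := by
    constructor
    · intro x
      have hw := P1 x
      have key : lam • (x:E) - A x
          = (lam0 • (x:E) - A x) - (lam0 - lam) • R lam0 (lam0 • (x:E) - A x) := by
        rw [hw, sub_smul]
        abel
      rw [key]
      show R lam0 (V ((lam0 • (x:E) - A x) - (lam0 - lam) • R lam0 (lam0 • (x:E) - A x))) = _
      rw [hVW]
      exact hw
    · intro f
      obtain ⟨hg, hgeq⟩ := P2 (V f)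
      refine ⟨hg, ?_⟩
      show lam • R lam0 (V f) - A ⟨R lam0 (V f), hg⟩ = f
      have key : lam • R lam0 (V f) - A ⟨R lam0 (V f), hg⟩
          = (lam0 • R lam0 (V f) - A ⟨R lam0 (V f), hg⟩) - (lam0 - lam) • R lam0 (V f) := by
        rw [sub_smul]
        abel
      rw [key, hgeq]
      exact hWV f
  have hmem : lam ∈ ρ := hρmax lam ⟨S, hS⟩
  have hRlamS : ∀ f : E, R lam f = S f := by
    intro f
    obtain ⟨hy, hyeq⟩ := hS.2 f
    conv_lhs => rw [← hyeq]
    exact (hR lam hmem).1 ⟨S f, hy⟩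
  refine ⟨hmem, fun f => ?_⟩
  rcases eq_or_ne f 0 with rfl | hf
  · rw [map_zero, smul_zero, aux_gaugeNorm_zero hu, norm_zero, mul_zero]
  · have hfn : 0 < ‖f‖ := norm_pos_iff.2 hf
    apply aux_gaugeNorm_le (by positivity : (0:ℝ) < ε * ‖f‖)
    rw [hRlamS f]
    have hSf : |S f| ≤ (M * ‖V f‖) • u := hMb (V f)
    have hcoef : |lam - lam0| * (M * ‖V f‖) ≤ ε * ‖f‖ := by
      have hVf : ‖V f‖ ≤ 2 * ‖f‖ := by
        refine (V.le_opNorm f).trans ?_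
        have := norm_nonneg f
        nlinarith
      have hδ1 : |lam - lam0| ≤ ε / (2 * M) := (hlam.trans_le (min_le_left _ _)).le
      have h2 : M * ‖V f‖ ≤ M * (2 * ‖f‖) := mul_le_mul_of_nonneg_left hVf hM.le
      have h3 : |lam - lam0| * (M * ‖V f‖) ≤ (ε / (2*M)) * (M * (2 * ‖f‖)) :=
        mul_le_mul hδ1 h2 (by positivity) (by positivity)
      refine h3.trans (le_of_eq ?_)
      field_simp
    calc |(lam - lam0) • S f| = |lam - lam0| • |S f| := aux_abs_smul _ _
      _ ≤ |lam - lam0| • ((M * ‖V f‖) • u) := aux_smul_mono (abs_nonneg _) hSf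
      _ = (|lam - lam0| * (M * ‖V f‖)) • u := smul_smul _ _ _
      _ ≤ (ε * ‖f‖) • u := aux_coeff_mono hcoef hu
end

section
/- Let $E$ be a complex Banach lattice, $u \ge 0$ a quasi-interior point, and $A$ a closed linear operator on $E$ with $\mathrm{dom}(A) \subseteq E_u$. If $\lambda_0$ is a simple pole of the resolvent $R(\cdot, A)$ with associated spectral projection $P$, then $(\lambda - \lambda_0) R(\lambda, A) \to P$ in the operator norm of $\mathcal{L}(E, E_u)$ as $\lambda \to \lambda_0$. -/
open Filter Topology

section Aux

variable {E : Type*} [NormedAddCommGroup E] [Lattice E] [HasSolidNorm E] [IsOrderedAddMonoid E] [NormedSpace ℝ E]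

/-- In a normed lattice group which is a normed `ℝ`-space, nonnegative scalars preserve
positivity (proved by dyadic approximation; no `OrderedSMul` assumption needed). -/
lemma aux_smul_nonneg {v : E} (hv : 0 ≤ v) {c : ℝ} (hc : 0 ≤ c) : 0 ≤ c • v := by
  -- reflection along powers of two
  have hrefl : ∀ (k : ℕ) (w : E), 0 ≤ (2 ^ k : ℕ) • w → 0 ≤ w := by
    intro k
    induction k with
    | zero => intro w h; simpa using h
    | succ k ih =>
      intro w h
      have h2 : (2 ^ (k + 1) : ℕ) • w = (2 ^ k : ℕ) • (2 • w) := by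
        rw [← mul_smul, pow_succ]
      rw [h2] at h
      exact nsmul_two_semiclosed (ih _ h)
  -- dyadic scalars
  have hdy : ∀ (m k : ℕ), 0 ≤ ((m : ℝ) / 2 ^ k) • v := by
    intro m k
    apply hrefl k
    have : (2 ^ k : ℕ) • (((m : ℝ) / 2 ^ k) • v) = (m : ℝ) • v := by
      rw [← Nat.cast_smul_eq_nsmul ℝ, smul_smul]
      congr 1
      push_cast
      field_simp
    rw [this, Nat.cast_smul_eq_nsmul]
    exact nsmul_nonneg hv m
  -- approximate `c` by dyadics from below
  set s : ℕ → ℝ := fun n => (⌊c * 2 ^ n⌋₊ : ℝ) / 2 ^ n with hs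
  have hsle : ∀ n, s n ≤ c := by
    intro n
    have h1 : (⌊c * 2 ^ n⌋₊ : ℝ) ≤ c * 2 ^ n := Nat.floor_le (by positivity)
    rw [hs]
    rw [div_le_iff₀ (by positivity)]
    simpa using h1
  have hsge : ∀ n, c - (1 / 2) ^ n ≤ s n := by
    intro n
    have h1 : c * 2 ^ n < (⌊c * 2 ^ n⌋₊ : ℝ) + 1 := Nat.lt_floor_add_one _
    rw [hs]
    rw [sub_le_iff_le_add, div_add' _ _ _ (by positivity : (2:ℝ) ^ n ≠ 0),
      le_div_iff₀ (by positivity)]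
    have h2 : (1 / 2 : ℝ) ^ n * 2 ^ n = 1 := by
      rw [← mul_pow]; norm_num
    nlinarith [h1]
  have hlim : Filter.Tendsto s atTop (nhds c) := by
    have hhalf : Filter.Tendsto (fun n : ℕ => (1 / 2 : ℝ) ^ n) atTop (nhds 0) := by
      apply tendsto_pow_atTop_nhds_zero_of_lt_one <;> norm_num
    have hlow : Filter.Tendsto (fun n : ℕ => c - (1 / 2 : ℝ) ^ n) atTop (nhds c) := by
      simpa using tendsto_const_nhds.sub hhalf
    exact tendsto_of_tendsto_of_tendsto_of_le_of_le hlow tendsto_const_nhds hsge hsle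
  have hlim2 : Filter.Tendsto (fun n => s n • v) atTop (nhds (c • v)) :=
    hlim.smul_const v
  exact le_of_tendsto_of_tendsto' tendsto_const_nhds hlim2 fun n => hdy _ _

lemma aux_smul_mono_vec {c : ℝ} (hc : 0 ≤ c) {x y : E} (hxy : x ≤ y) : c • x ≤ c • y := by
  have h := aux_smul_nonneg (sub_nonneg.mpr hxy) hc
  rw [smul_sub] at h
  exact sub_nonneg.mp h

lemma aux_smul_mono_scal {v : E} (hv : 0 ≤ v) {a b : ℝ} (hab : a ≤ b) : a • v ≤ b • v := by
  have h := aux_smul_nonneg hv (sub_nonneg.mpr hab)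
  rw [sub_smul] at h
  exact sub_nonneg.mp h

lemma aux_abs_smul_le {c : ℝ} (hc : 0 ≤ c) (x : E) : |c • x| ≤ c • |x| := by
  have h1 : c • x ≤ c • |x| := aux_smul_mono_vec hc (le_abs_self x)
  have h2 : -(c • x) ≤ c • |x| := by
    rw [← smul_neg]
    exact aux_smul_mono_vec hc (neg_le_abs x)
  calc |c • x| = (c • x) ⊔ (-(c • x)) := rfl
    _ ≤ c • |x| := sup_le h1 h2

lemma aux_abs_sub_le (a b : E) : |a - b| ≤ |a| + |b| := by
  have h1 : a - b ≤ |a| + |b| := by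
    calc a - b = a + (-b) := by abel
      _ ≤ |a| + |b| := add_le_add (le_abs_self a) (neg_le_abs b)
  have h2 : -(a - b) ≤ |a| + |b| := by
    calc -(a - b) = b + (-a) := by abel
      _ ≤ |b| + |a| := add_le_add (le_abs_self b) (neg_le_abs a)
      _ = |a| + |b| := by abel
  calc |a - b| = (a - b) ⊔ (-(a - b)) := rfl
    _ ≤ |a| + |b| := sup_le h1 h2

end Aux

set_option maxHeartbeats 2000000 in
/-- Lemma 2.3(ii): if `dom A ⊆ E_u` and `lam0` is a simple pole of the resolvent with
spectral projection (residue) `P`, then `(lam - lam0) R(lam, A) → P` in the operator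
norm of `L(E, E_u)` as `lam → lam0`. -/
theorem stmt1 {E : Type*} [NormedAddCommGroup E] [Lattice E] [HasSolidNorm E] [IsOrderedAddMonoid E] [NormedSpace ℝ E] [CompleteSpace E]
    (u : E) (hu : 0 ≤ u) (huq : Dense {x : E | InPrincipalIdeal u x})
    (A : E →ₗ.[ℝ] E) (hclosed : IsClosed (A.graph : Set (E × E)))
    (hdom : ∀ x ∈ A.domain, InPrincipalIdeal u x)
    (ρ : Set ℝ) (R : ℝ → E →L[ℝ] E)
    (hR : ∀ lam ∈ ρ, IsResolventAt A lam (R lam))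
    (lam0 : ℝ)
    -- `lam0` is an isolated point of the spectrum:
    (hiso : ∀ᶠ lam in 𝓝[≠] lam0, lam ∈ ρ) (hspec : lam0 ∉ ρ)
    -- `lam0` is a simple pole of the resolvent with residue (spectral projection) `P`:
    (P : E →L[ℝ] E) (hPproj : P.comp P = P) (hPne : P ≠ 0)
    (hsimple : Tendsto (fun lam => (lam - lam0) • R lam) (𝓝[≠] lam0) (𝓝 P)) :
    ∀ ε > 0, ∀ᶠ lam in 𝓝[≠] lam0,
      ∀ f : E, gaugeNorm u ((lam - lam0) • R lam f - P f) ≤ ε * ‖f‖ := by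
  classical
  -- choose a fixed point `μ` in the resolvent set near `lam0`
  obtain ⟨μ, hμρ, -⟩ : ∃ μ, μ ∈ ρ ∧ μ ∈ ({lam0}ᶜ : Set ℝ) :=
    (hiso.and eventually_mem_nhdsWithin).exists
  -- resolvent identity
  have hres : ∀ lam ∈ ρ, ∀ f : E, R μ ((μ - lam) • R lam f + f) = R lam f := by
    intro lam hlam f
    obtain ⟨hmem, heq⟩ := (hR lam hlam).2 f
    have hA : A ⟨R lam f, hmem⟩ = lam • R lam f - f :=
      eq_sub_of_add_eq' ((sub_eq_iff_eq_add.mp heq).symm)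
    have h1 := (hR μ hμρ).1 ⟨R lam f, hmem⟩
    rw [hA] at h1
    have h1' : R μ (μ • R lam f - (lam • R lam f - f)) = R lam f := h1
    have harg : (μ - lam) • R lam f + f = μ • R lam f - (lam • R lam f - f) := by
      rw [sub_smul]; abel
    rw [harg]
    exact h1'
  -- convenient scalar limits
  have h0 : Tendsto (fun lam : ℝ => lam - lam0) (𝓝[≠] lam0) (𝓝 0) := by
    apply tendsto_nhdsWithin_of_tendsto_nhds
    have h0' : Tendsto (fun lam : ℝ => lam - lam0) (𝓝 lam0) (𝓝 (lam0 - lam0)) :=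
      tendsto_id.sub tendsto_const_nhds
    simpa using h0'
  have hμl : Tendsto (fun lam : ℝ => μ - lam) (𝓝[≠] lam0) (𝓝 (μ - lam0)) := by
    apply tendsto_nhdsWithin_of_tendsto_nhds
    exact tendsto_const_nhds.sub tendsto_id
  -- `P = (μ - lam0) • R μ ∘ P`
  have hPid : ∀ f : E, (μ - lam0) • R μ (P f) = P f := by
    intro f
    have h1 : Tendsto (fun lam => (lam - lam0) • R lam f) (𝓝[≠] lam0) (𝓝 (P f)) := by
      have := ((ContinuousLinearMap.apply ℝ E f).continuous.tendsto P).comp hsimple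
      simpa [Function.comp_def] using this
    have ha : Tendsto (fun lam => (lam - lam0) • f) (𝓝[≠] lam0) (𝓝 (0 : E)) := by
      simpa using h0.smul_const f
    have hb : Tendsto (fun lam => (μ - lam) • ((lam - lam0) • R lam f)) (𝓝[≠] lam0)
        (𝓝 ((μ - lam0) • P f)) := hμl.smul h1
    have h2 : Tendsto (fun lam => R μ ((lam - lam0) • f + (μ - lam) • ((lam - lam0) • R lam f)))
        (𝓝[≠] lam0) (𝓝 (R μ ((μ - lam0) • P f))) := by
      apply ((R μ).continuous.tendsto _).comp
      simpa using ha.add hb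
    have h3 : ∀ᶠ lam in 𝓝[≠] lam0,
        (lam - lam0) • R lam f
          = R μ ((lam - lam0) • f + (μ - lam) • ((lam - lam0) • R lam f)) := by
      filter_upwards [hiso] with lam hlam
      have hr := hres lam hlam f
      calc (lam - lam0) • R lam f = (lam - lam0) • R μ ((μ - lam) • R lam f + f) := by rw [hr]
        _ = R μ ((lam - lam0) • ((μ - lam) • R lam f + f)) := by rw [map_smul]
        _ = R μ ((lam - lam0) • f + (μ - lam) • ((lam - lam0) • R lam f)) := by
            congr 1
            rw [smul_add, smul_comm]
            abel
    have h4 := tendsto_nhds_unique (h1.congr' h3) h2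
    rw [map_smul] at h4
    exact h4.symm
  -- closed sets covering `E`
  have habs_cont : Continuous fun x : E => |x| := by
    have habs : (fun x : E => |x|) = fun x : E => x ⊔ -x := rfl
    rw [habs]
    exact continuous_id.sup continuous_neg
  set C : ℕ → Set E := fun n => {g : E | |R μ g| ≤ (n : ℝ) • u} with hC
  have hCclosed : ∀ n, IsClosed (C n) :=
    fun n => isClosed_le (habs_cont.comp (R μ).continuous) continuous_const
  have hCcover : ⋃ n, C n = Set.univ := by
    ext g
    simp only [Set.mem_iUnion, Set.mem_univ, iff_true, hC, Set.mem_setOf_eq]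
    obtain ⟨hmem, -⟩ := (hR μ hμρ).2 g
    obtain ⟨c, hc, hle⟩ := hdom _ hmem
    obtain ⟨n, hn⟩ := exists_nat_ge c
    exact ⟨n, hle.trans (aux_smul_mono_scal hu hn)⟩
  obtain ⟨n, x₀, hx₀⟩ := nonempty_interior_of_iUnion_of_closed hCclosed hCcover
  obtain ⟨r, hr, hball⟩ := Metric.mem_nhds_iff.mp (mem_interior_iff_mem_nhds.mp hx₀)
  have hx₀C : |R μ x₀| ≤ (n : ℝ) • u := hball (Metric.mem_ball_self hr)
  -- bound on small vectors
  have hsmall : ∀ h : E, ‖h‖ < r → |R μ h| ≤ ((2 * n : ℝ)) • u := by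
    intro h hh
    have h1 : x₀ + h ∈ C n := by
      apply hball
      simp only [Metric.mem_ball, dist_eq_norm]
      simpa using hh
    have h2 : R μ h = R μ (x₀ + h) - R μ x₀ := by rw [map_add]; abel
    calc |R μ h| = |R μ (x₀ + h) - R μ x₀| := by rw [h2]
      _ ≤ |R μ (x₀ + h)| + |R μ x₀| := aux_abs_sub_le _ _
      _ ≤ (n : ℝ) • u + (n : ℝ) • u := add_le_add h1 hx₀C
      _ = (2 * n : ℝ) • u := by rw [← add_smul]; ring_nf
  -- uniform bound `|R μ g| ≤ (K ‖g‖) • u`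
  set K : ℝ := 4 * (n + 1) / r with hK
  have hKpos : 0 < K := by positivity
  have hbound : ∀ g : E, |R μ g| ≤ (K * ‖g‖) • u := by
    intro g
    rcases eq_or_ne g 0 with rfl | hg
    · simp
    · have hgn : 0 < ‖g‖ := norm_pos_iff.mpr hg
      set t : ℝ := r / (2 * ‖g‖) with ht
      have htpos : 0 < t := by positivity
      have hnorm : ‖t • g‖ < r := by
        rw [norm_smul, Real.norm_eq_abs, abs_of_pos htpos, ht]
        rw [div_mul_eq_mul_div, mul_comm, div_lt_iff₀ (by positivity)]
        nlinarith
      have h1 := hsmall (t • g) hnorm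
      have h2 : R μ g = t⁻¹ • R μ (t • g) := by
        rw [map_smul, smul_smul, inv_mul_cancel₀ (ne_of_gt htpos), one_smul]
      have hn0 : (0 : ℝ) ≤ n := Nat.cast_nonneg n
      calc |R μ g| = |t⁻¹ • R μ (t • g)| := by rw [h2]
        _ ≤ t⁻¹ • |R μ (t • g)| := aux_abs_smul_le (by positivity) _
        _ ≤ t⁻¹ • ((2 * n : ℝ) • u) := aux_smul_mono_vec (by positivity) h1
        _ = (t⁻¹ * (2 * n)) • u := by rw [smul_smul]
        _ ≤ (K * ‖g‖) • u := by
            apply aux_smul_mono_scal hu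
            have hti : t⁻¹ = 2 * ‖g‖ / r := by
              rw [ht]; field_simp
            rw [hti, hK, div_mul_eq_mul_div, div_mul_eq_mul_div, div_le_div_iff₀ hr hr]
            nlinarith
  -- the correcting operator `T`
  set T : ℝ → E →L[ℝ] E := fun lam =>
    (lam - lam0) • (1 : E →L[ℝ] E) + ((μ - lam) * (lam - lam0)) • R lam - (μ - lam0) • P
    with hT
  have hTlim : Tendsto T (𝓝[≠] lam0) (𝓝 (0 : E →L[ℝ] E)) := by
    have h1 : Tendsto (fun lam => (lam - lam0) • (1 : E →L[ℝ] E)) (𝓝[≠] lam0)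
        (𝓝 (0 : E →L[ℝ] E)) := by
      simpa using h0.smul_const (1 : E →L[ℝ] E)
    have h2 : Tendsto (fun lam => ((μ - lam) * (lam - lam0)) • R lam) (𝓝[≠] lam0)
        (𝓝 ((μ - lam0) • P)) := by
      have heq : (fun lam => ((μ - lam) * (lam - lam0)) • R lam)
          = fun lam => (μ - lam) • ((lam - lam0) • R lam) :=
        funext fun lam => mul_smul _ _ _
      rw [heq]
      exact hμl.smul hsimple
    have h3 := (h1.add h2).sub
      (tendsto_const_nhds : Tendsto (fun _ : ℝ => (μ - lam0) • P) (𝓝[≠] lam0) _)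
    simpa [hT] using h3
  -- factorization through `R μ`
  have hfact : ∀ᶠ lam in 𝓝[≠] lam0, ∀ f : E,
      (lam - lam0) • R lam f - P f = R μ (T lam f) := by
    filter_upwards [hiso] with lam hlam f
    have e1 : (μ - lam) • R μ (R lam f) = R lam f - R μ f := by
      have hr := hres lam hlam f
      rw [map_add, map_smul] at hr
      exact eq_sub_of_add_eq hr
    have e2 : T lam f = (lam - lam0) • f + ((μ - lam) * (lam - lam0)) • R lam f
        - (μ - lam0) • P f := by
      simp [hT]
    have e3 : ((μ - lam) * (lam - lam0)) • R μ (R lam f)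
        = (lam - lam0) • (R lam f - R μ f) := by
      rw [mul_comm, mul_smul, e1]
    rw [e2, map_sub, map_add, map_smul, map_smul, map_smul, hPid f, e3, smul_sub]
    abel
  -- conclusion
  intro ε hε
  have hεK : 0 < ε / K := div_pos hε hKpos
  have hTub : ∀ᶠ lam in 𝓝[≠] lam0, ‖T lam‖ < ε / K :=
    (NormedAddCommGroup.tendsto_nhds_zero.mp hTlim) (ε / K) hεK
  filter_upwards [hfact, hTub] with lam hf hTn f
  have hx : |(lam - lam0) • R lam f - P f| ≤ (ε * ‖f‖) • u := by
    rw [hf f]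
    refine (hbound _).trans (aux_smul_mono_scal hu ?_)
    have h1 : ‖T lam f‖ ≤ ‖T lam‖ * ‖f‖ := (T lam).le_opNorm f
    have h2 : ‖T lam‖ * ‖f‖ ≤ (ε / K) * ‖f‖ :=
      mul_le_mul_of_nonneg_right hTn.le (norm_nonneg f)
    have h3 : K * ((ε / K) * ‖f‖) = ε * ‖f‖ := by
      field_simp
    calc K * ‖T lam f‖ ≤ K * ((ε / K) * ‖f‖) :=
          mul_le_mul_of_nonneg_left (h1.trans h2) hKpos.le
      _ = ε * ‖f‖ := h3
  unfold gaugeNorm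
  apply le_of_forall_pos_le_add
  intro δ hδ
  apply csInf_le ⟨0, fun c hc => hc.1.le⟩
  refine ⟨by positivity, hx.trans (aux_smul_mono_scal hu (by linarith))⟩
end

section
/- Let $E$ be a complex Banach lattice and $P, Q \in \mathcal{L}(E)$ be projections with $0 \le Q \le P$ and $Q \ne 0$. If $P$ has rank one, then $Q$ has rank one. -/
private lemma stmt6_smul_nonneg {E : Type*} [NormedAddCommGroup E] [Lattice E] [HasSolidNorm E] [IsOrderedAddMonoid E] [NormedSpace ℝ E]
    {c : ℝ} {u : E} (hc : 0 ≤ c) (hu : 0 ≤ u) : 0 ≤ c • u := by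
  have half : ∀ x : E, 0 ≤ x + x → 0 ≤ x := fun x h =>
    nsmul_two_semiclosed (by rwa [two_nsmul])
  have dyadic : ∀ (n k : ℕ), 0 ≤ ((k : ℝ) / 2 ^ n) • u := by
    intro n
    induction n with
    | zero =>
      intro k
      simpa [Nat.cast_smul_eq_nsmul] using nsmul_nonneg hu k
    | succ n ih =>
      intro k
      apply half
      have heq : ((k : ℝ) / 2 ^ (n + 1)) • u + ((k : ℝ) / 2 ^ (n + 1)) • u
          = ((k : ℝ) / 2 ^ n) • u := by
        rw [← add_smul]
        congr 1
        ring
      rw [heq]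
      exact ih k
  have hcl : IsClosed {t : ℝ | 0 ≤ t • u} :=
    isClosed_nonneg.preimage (continuous_id.smul continuous_const)
  set f : ℕ → ℝ := fun n => (⌊c * 2 ^ n⌋₊ : ℝ) / 2 ^ n with hf
  have hmem : ∀ n, f n ∈ {t : ℝ | 0 ≤ t • u} := fun n => dyadic n _
  have htend : Filter.Tendsto f Filter.atTop (nhds c) := by
    have hlow : ∀ n, c - (1 / 2 : ℝ) ^ n ≤ f n := by
      intro n
      have h1 : c * 2 ^ n < (⌊c * 2 ^ n⌋₊ : ℝ) + 1 := Nat.lt_floor_add_one _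
      have h2 : (0 : ℝ) < 2 ^ n := by positivity
      rw [hf]
      rw [div_pow, one_pow, sub_le_iff_le_add, ← add_div, le_div_iff₀ h2]
      linarith
    have hhigh : ∀ n, f n ≤ c := by
      intro n
      have h1 : (⌊c * 2 ^ n⌋₊ : ℝ) ≤ c * 2 ^ n := Nat.floor_le (by positivity)
      have h2 : (0 : ℝ) < 2 ^ n := by positivity
      rw [hf, div_le_iff₀ h2]
      simpa using h1
    have l1 : Filter.Tendsto (fun n : ℕ => c - (1 / 2 : ℝ) ^ n) Filter.atTop (nhds c) := by
      have := tendsto_pow_atTop_nhds_zero_of_lt_one (r := (1/2 : ℝ)) (by norm_num) (by norm_num)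
      simpa using (tendsto_const_nhds (x := c)).sub this
    exact tendsto_of_tendsto_of_tendsto_of_le_of_le l1 tendsto_const_nhds hlow hhigh
  exact hcl.mem_of_tendsto htend (Filter.Eventually.of_forall hmem)

/-- If `P, Q` are bounded projections on a Banach lattice with `0 ≤ Q ≤ P` (in the sense
of positive operators), `Q ≠ 0`, and `P` has rank one, then `Q` has rank one. -/
theorem stmt6 {E : Type*} [NormedAddCommGroup E] [Lattice E] [HasSolidNorm E] [IsOrderedAddMonoid E] [NormedSpace ℝ E] [CompleteSpace E]
    (P Q : E →L[ℝ] E)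
    (hPproj : P.comp P = P) (hQproj : Q.comp Q = Q)
    (hQpos : ∀ f : E, 0 ≤ f → 0 ≤ Q f)
    (hQleP : ∀ f : E, 0 ≤ f → Q f ≤ P f)
    (hQne : Q ≠ 0)
    (hrankP : Module.finrank ℝ (LinearMap.range (P : E →ₗ[ℝ] E)) = 1) :
    Module.finrank ℝ (LinearMap.range (Q : E →ₗ[ℝ] E)) = 1 := by
  have hPpos : ∀ f : E, 0 ≤ f → 0 ≤ P f := fun f hf => (hQpos f hf).trans (hQleP f hf)
  have hQQ : ∀ f : E, Q (Q f) = Q f := fun f => by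
    rw [← ContinuousLinearMap.comp_apply, hQproj]
  have hPP : ∀ f : E, P (P f) = P f := fun f => by
    rw [← ContinuousLinearMap.comp_apply, hPproj]
  have hQdecomp : ∀ f : E, Q f = Q f⁺ - Q f⁻ := fun f => by
    rw [← map_sub, posPart_sub_negPart]
  -- get a positive f₀ with Q f₀ ≠ 0
  obtain ⟨g, hg⟩ : ∃ g, Q g ≠ 0 := by
    by_contra h
    push_neg at h
    exact hQne (ContinuousLinearMap.ext fun x => by simp [h x])
  obtain ⟨f₀, hf₀pos, hf₀⟩ : ∃ f₀, 0 ≤ f₀ ∧ Q f₀ ≠ 0 := by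
    rcases eq_or_ne (Q g⁺) 0 with h1 | h1
    · refine ⟨g⁻, negPart_nonneg g, fun h2 => hg ?_⟩
      rw [hQdecomp g, h1, h2, sub_zero]
    · exact ⟨g⁺, posPart_nonneg g, h1⟩
  set u := P f₀ with hu
  have hu0 : 0 ≤ u := hPpos f₀ hf₀pos
  have hune : u ≠ 0 := fun h =>
    hf₀ (le_antisymm (h ▸ hQleP f₀ hf₀pos) (hQpos f₀ hf₀pos))
  have hPu : P u = u := hPP f₀
  -- range P = span {u}
  have humem : u ∈ LinearMap.range (P : E →ₗ[ℝ] E) := ⟨f₀, rfl⟩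
  have hfd : FiniteDimensional ℝ (LinearMap.range (P : E →ₗ[ℝ] E)) :=
    Module.finite_of_finrank_pos (by rw [hrankP]; norm_num)
  have hspan : Submodule.span ℝ {u} = LinearMap.range (P : E →ₗ[ℝ] E) := by
    apply Submodule.eq_of_le_of_finrank_eq
    · rwa [Submodule.span_singleton_le_iff_mem]
    · rw [finrank_span_singleton hune, hrankP]
  have hc : ∀ f : E, ∃ c : ℝ, P f = c • u := by
    intro f
    have hmem : P f ∈ Submodule.span ℝ {u} := by
      rw [hspan]; exact ⟨f, rfl⟩
    obtain ⟨c, hcf⟩ := Submodule.mem_span_singleton.mp hmem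
    exact ⟨c, hcf.symm⟩
  set v := Q u with hv
  have hQv : Q v = v := hQQ u
  have hv0 : 0 ≤ v := hQpos u hu0
  -- key estimate : for 0 ≤ f with P f = c • u, we have Q f ≤ c • v
  have key : ∀ f : E, 0 ≤ f → ∀ c : ℝ, P f = c • u → Q f ≤ c • v := by
    intro f hf c hcf
    have h2 : 0 ≤ P f - Q f := sub_nonneg.mpr (hQleP f hf)
    have h3 : 0 ≤ Q (P f - Q f) := hQpos _ h2
    rw [map_sub] at h3
    have h4 : Q (Q f) ≤ Q (P f) := sub_nonneg.mp h3
    rw [hQQ f, hcf, map_smul] at h4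
    exact h4
  -- v ≠ 0
  have hvne : v ≠ 0 := by
    intro h
    apply hQne
    have hz : ∀ f : E, 0 ≤ f → Q f = 0 := by
      intro f hf
      obtain ⟨c, hcf⟩ := hc f
      have h1 := key f hf c hcf
      rw [h, smul_zero] at h1
      exact le_antisymm h1 (hQpos f hf)
    refine ContinuousLinearMap.ext fun x => ?_
    rw [hQdecomp x, hz _ (posPart_nonneg x), hz _ (negPart_nonneg x), sub_zero,
      ContinuousLinearMap.zero_apply]
  -- P v = u
  obtain ⟨cv, hcv⟩ := hc v
  have hvu : v ≤ u := by
    have := hQleP u hu0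
    rwa [hPu] at this
  have hPv : P v = u := by
    have h1 : cv • u ≤ u := by
      have h2 : 0 ≤ P (u - v) := hPpos _ (sub_nonneg.mpr hvu)
      rw [map_sub, hPu, hcv] at h2
      exact sub_nonneg.mp h2
    have hle : cv ≤ 1 := by
      by_contra h
      push_neg at h
      have h3 : 0 ≤ (cv - 1) • u := stmt6_smul_nonneg (by linarith) hu0
      have h4 : (cv - 1) • u ≤ 0 := by
        rw [sub_smul, one_smul]
        exact sub_nonpos.mpr h1
      have h5 : (cv - 1) • u = 0 := le_antisymm h4 h3
      rcases smul_eq_zero.mp h5 with h6 | h6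
      · linarith
      · exact hune h6
    have hge : 1 ≤ cv := by
      by_contra h
      push_neg at h
      have h1' : v ≤ cv • v := by
        have := key v hv0 cv hcv
        rwa [hQv] at this
      have h3 : 0 ≤ (1 - cv) • v := stmt6_smul_nonneg (by linarith) hv0
      have h4 : (1 - cv) • v ≤ 0 := by
        rw [sub_smul, one_smul]
        exact sub_nonpos.mpr h1'
      have h5 : (1 - cv) • v = 0 := le_antisymm h4 h3
      rcases smul_eq_zero.mp h5 with h6 | h6
      · linarith
      · exact hvne h6
    rw [hcv, le_antisymm hle hge, one_smul]
  -- every positive fixed point of Q is a multiple of v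
  have main : ∀ z : E, 0 ≤ z → Q z = z → ∃ c : ℝ, z = c • v := by
    intro z hz hQz
    obtain ⟨c, hcz⟩ := hc z
    have h1 : z ≤ c • v := by
      have := key z hz c hcz
      rwa [hQz] at this
    have hw0 : 0 ≤ c • v - z := sub_nonneg.mpr h1
    have hPw : P (c • v - z) = 0 := by
      rw [map_sub, map_smul, hPv, hcz, sub_self]
    have h2 : Q (c • v - z) ≤ 0 := hPw ▸ hQleP _ hw0
    have h4 : Q (c • v - z) = 0 := le_antisymm h2 (hQpos _ hw0)
    rw [map_sub, map_smul, hQv, hQz] at h4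
    exact ⟨c, (sub_eq_zero.mp h4).symm⟩
  -- conclude: range Q = span {v}
  have hrange : LinearMap.range (Q : E →ₗ[ℝ] E) = Submodule.span ℝ {v} := by
    apply le_antisymm
    · rintro x ⟨y, rfl⟩
      obtain ⟨c1, h1⟩ := main (Q y⁺) (hQpos _ (posPart_nonneg y)) (hQQ y⁺)
      obtain ⟨c2, h2⟩ := main (Q y⁻) (hQpos _ (negPart_nonneg y)) (hQQ y⁻)
      have hx : (Q : E →ₗ[ℝ] E) y = c1 • v - c2 • v := by
        show Q y = c1 • v - c2 • v
        rw [hQdecomp y, h1, h2]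
      rw [hx]
      exact Submodule.sub_mem _
        (Submodule.smul_mem _ _ (Submodule.mem_span_singleton_self v))
        (Submodule.smul_mem _ _ (Submodule.mem_span_singleton_self v))
    · rw [Submodule.span_singleton_le_iff_mem]
      exact ⟨u, rfl⟩
  rw [hrange, finrank_span_singleton hvne]
end

section
/- Let $(e^{tA})_{t \ge 0}$ and $(e^{tB})_{t \ge 0}$ be real $C_0$-semigroups on a complex Banach lattice $E$, let $u \ge 0$ be a quasi-interior point, and let $\varphi \in E'$ be a strictly positive functional. Assume: (a) there exist $t_1, t_2 \ge 0$ with $e^{t_1 A} E \subseteq E_u$ and $e^{t_2 A'} E' \subseteq (E')_{\varphi}$; (b) there exist $t_3 \ge 0$ and $c > 0$ with $e^{tB} \ge c (u \otimes \varphi)$ for all $t \ge t_3$; (c) $\|e^{tA}\| \to 0$ as $t \to \infty$. Then there exist $\tau \ge 0$ and $c' > 0$ such that $e^{tB}|f| - |e^{tA} f| \ge c' (u \otimes \varphi)|f|$ for all $t \ge \tau$ and all $f \in E$. In particular, $(e^{tB})$ uniformly eventually dominates $(e^{tA})$. -/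
open Filter Topology

section smul_order
variable {E : Type*} [NormedAddCommGroup E] [Lattice E] [HasSolidNorm E] [IsOrderedAddMonoid E]
  [NormedSpace ℝ E]

omit [NormedSpace ℝ E] in
lemma pow2_nsmul_nonneg : ∀ (n : ℕ) (y : E), 0 ≤ 2 ^ n • y → 0 ≤ y := by
  intro n
  induction n with
  | zero => intro y h; simpa using h
  | succ n ih =>
    intro y h
    apply ih
    apply nsmul_two_semiclosed
    rw [smul_smul, ← pow_succ']
    exact h

lemma real_smul_nonneg {a : ℝ} {x : E} (ha : 0 ≤ a) (hx : 0 ≤ x) : 0 ≤ a • x := by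
  have hcl : IsClosed {b : ℝ | 0 ≤ b • x} :=
    isClosed_le continuous_const (continuous_id.smul continuous_const)
  have key : ∀ n : ℕ, ((⌊a * 2 ^ n⌋₊ : ℝ) / 2 ^ n) ∈ {b : ℝ | 0 ≤ b • x} := by
    intro n
    apply pow2_nsmul_nonneg n
    have h2 : (0:ℝ) < 2 ^ n := by positivity
    have : (2 ^ n : ℕ) • (((⌊a * 2 ^ n⌋₊ : ℝ) / 2 ^ n) • x) = ⌊a * 2 ^ n⌋₊ • x := by
      rw [← Nat.cast_smul_eq_nsmul ℝ ((2:ℕ)^n), smul_smul, ← Nat.cast_smul_eq_nsmul ℝ]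
      congr 1
      push_cast
      field_simp
    rw [this]
    exact nsmul_nonneg hx _
  have tends : Tendsto (fun n : ℕ => ((⌊a * 2 ^ n⌋₊ : ℝ) / 2 ^ n)) atTop (𝓝 a) := by
    have h1 : Tendsto (fun n : ℕ => ((2:ℝ) ^ n)) atTop atTop :=
      tendsto_pow_atTop_atTop_of_one_lt one_lt_two
    exact (tendsto_nat_floor_mul_div_atTop ha).comp h1
  exact hcl.mem_of_tendsto tends (Eventually.of_forall key)

lemma real_smul_mono_right {a : ℝ} {x y : E} (ha : 0 ≤ a) (h : x ≤ y) : a • x ≤ a • y := by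
  have := real_smul_nonneg ha (sub_nonneg.2 h)
  rwa [smul_sub, sub_nonneg] at this

lemma real_smul_mono_left {a b : ℝ} {x : E} (h : a ≤ b) (hx : 0 ≤ x) : a • x ≤ b • x := by
  have := real_smul_nonneg (sub_nonneg.2 h) hx
  rwa [sub_smul, sub_nonneg] at this

lemma abs_real_smul_le {a : ℝ} (ha : 0 ≤ a) (x : E) : |a • x| ≤ a • |x| := by
  rw [abs_le']
  constructor
  · exact real_smul_mono_right ha (le_abs_self x)
  · rw [← smul_neg]
    exact real_smul_mono_right ha (neg_le_abs x)

end smul_order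

lemma baire_convex_symm {F : Type*} [NormedAddCommGroup F] [NormedSpace ℝ F] [CompleteSpace F]
    (A : ℕ → Set F) (hcl : ∀ n, IsClosed (A n)) (hconv : ∀ n, Convex ℝ (A n))
    (hsym : ∀ n (x : F), x ∈ A n → -x ∈ A n) (hun : ∀ x, ∃ n, x ∈ A n) :
    ∃ n, ∃ r > (0:ℝ), Metric.ball (0:F) r ⊆ A n := by
  obtain ⟨n, x, hx⟩ := nonempty_interior_of_iUnion_of_closed hcl
    (by ext y; simpa [Set.mem_iUnion] using hun y)
  have h0 : (0:F) ∈ interior (A n) := by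
    have h := (hconv n).combo_interior_self_mem_interior hx
      (hsym n x (interior_subset hx)) (a := (1:ℝ)/2) (b := (1:ℝ)/2)
      (by norm_num) (by norm_num) (by norm_num)
    simpa [smul_neg] using h
  rw [mem_interior_iff_mem_nhds, Metric.mem_nhds_iff] at h0
  obtain ⟨r, hr, hball⟩ := h0
  exact ⟨n, r, hr, hball⟩

/-- Uniform bound for the smoothing into the principal ideal `E_u`. -/
lemma uniform_ideal_bound {E : Type*} [NormedAddCommGroup E] [Lattice E] [HasSolidNorm E] [IsOrderedAddMonoid E] [NormedSpace ℝ E]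
    [CompleteSpace E] (u : E) (hu : 0 ≤ u) (T1 : E →L[ℝ] E)
    (h1 : ∀ f : E, ∃ c : ℝ, 0 < c ∧ |T1 f| ≤ c • u) :
    ∃ C > (0:ℝ), ∀ f : E, |T1 f| ≤ (C * ‖f‖) • u := by
  set A : ℕ → Set E := fun n => {f | |T1 f| ≤ (n : ℝ) • u} with hA
  have habs : Continuous fun f : E => |T1 f| := by
    have : (fun f : E => |T1 f|) = fun f : E => (T1 f) ⊔ (-(T1 f)) := rfl
    rw [this]
    exact T1.continuous.sup T1.continuous.neg
  have hcl : ∀ n, IsClosed (A n) := fun n => isClosed_le habs continuous_const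
  have hconv : ∀ n, Convex ℝ (A n) := by
    intro n x hx y hy a b ha hb hab
    replace hx : |T1 x| ≤ (n:ℝ) • u := hx
    replace hy : |T1 y| ≤ (n:ℝ) • u := hy
    show |T1 (a • x + b • y)| ≤ (n:ℝ) • u
    have h1' : |T1 (a • x + b • y)| ≤ a • |T1 x| + b • |T1 y| := by
      rw [map_add, map_smul, map_smul]
      exact (abs_add_le _ _).trans (add_le_add (abs_real_smul_le ha _) (abs_real_smul_le hb _))
    refine h1'.trans ?_
    calc a • |T1 x| + b • |T1 y| ≤ a • ((n:ℝ) • u) + b • ((n:ℝ) • u) :=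
          add_le_add (real_smul_mono_right ha hx) (real_smul_mono_right hb hy)
      _ = (n:ℝ) • u := by rw [← add_smul, hab, one_smul]
  have hsym : ∀ n (x : E), x ∈ A n → -x ∈ A n := by
    intro n x hx
    replace hx : |T1 x| ≤ (n:ℝ) • u := hx
    show |T1 (-x)| ≤ (n:ℝ) • u
    rwa [map_neg, abs_neg]
  have hun : ∀ x, ∃ n, x ∈ A n := by
    intro x
    obtain ⟨c, hc, hle⟩ := h1 x
    exact ⟨⌈c⌉₊, hle.trans (real_smul_mono_left (Nat.le_ceil c) hu)⟩
  obtain ⟨n, r, hr, hball⟩ := baire_convex_symm A hcl hconv hsym hun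
  refine ⟨(2 * (n:ℝ) + 1) / r, by positivity, fun f => ?_⟩
  rcases eq_or_ne f 0 with rfl | hf
  · simp
  · have hfn : (0:ℝ) < ‖f‖ := norm_pos_iff.2 hf
    set g : E := (r / (2 * ‖f‖)) • f with hg
    have hgmem : g ∈ A n := by
      apply hball
      rw [Metric.mem_ball, dist_zero_right, hg, norm_smul, Real.norm_eq_abs,
        abs_of_pos (by positivity : (0:ℝ) < r / (2 * ‖f‖))]
      have : r / (2 * ‖f‖) * ‖f‖ = r / 2 := by field_simp
      rw [this]
      linarith
    have hTg : |T1 g| ≤ (n:ℝ) • u := hgmem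
    have hfeq : f = (2 * ‖f‖ / r) • g := by
      rw [hg, smul_smul]
      have : 2 * ‖f‖ / r * (r / (2 * ‖f‖)) = 1 := by field_simp
      rw [this, one_smul]
    have hTf : T1 f = (2 * ‖f‖ / r) • T1 g := by
      conv_lhs => rw [hfeq]
      rw [map_smul]
    calc |T1 f| = |(2 * ‖f‖ / r) • T1 g| := by rw [hTf]
      _ ≤ (2 * ‖f‖ / r) • |T1 g| := abs_real_smul_le (by positivity) _
      _ ≤ (2 * ‖f‖ / r) • ((n:ℝ) • u) := real_smul_mono_right (by positivity) hTg
      _ = (2 * ‖f‖ / r * (n:ℝ)) • u := by rw [smul_smul]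
      _ ≤ ((2 * (n:ℝ) + 1) / r * ‖f‖) • u := by
          apply real_smul_mono_left _ hu
          rw [div_mul_eq_mul_div, div_mul_eq_mul_div, div_le_div_iff₀ hr hr]
          nlinarith [hfn.le, (Nat.cast_nonneg n : (0:ℝ) ≤ (n:ℝ))]

/-- Uniform bound for the dual smoothing. -/
lemma uniform_dual_bound {E : Type*} [NormedAddCommGroup E] [Lattice E] [HasSolidNorm E] [IsOrderedAddMonoid E] [NormedSpace ℝ E]
    [CompleteSpace E] (φ : E →L[ℝ] ℝ) (hφpos : ∀ f : E, 0 ≤ f → 0 ≤ φ f)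
    (T2 : E →L[ℝ] E)
    (h2 : ∀ ψ : E →L[ℝ] ℝ, ∃ c > (0:ℝ), ∀ g f : E, |g| ≤ f → |ψ (T2 g)| ≤ c * φ f) :
    ∃ C > (0:ℝ), ∀ g : E, ‖T2 g‖ ≤ C * φ |g| := by
  set A : ℕ → Set (E →L[ℝ] ℝ) := fun n => {ψ | ∀ g : E, |ψ (T2 g)| ≤ (n:ℝ) * φ |g|} with hA
  have hcl : ∀ n, IsClosed (A n) := by
    intro n
    have : A n = ⋂ g : E, {ψ : E →L[ℝ] ℝ | |ψ (T2 g)| ≤ (n:ℝ) * φ |g|} := by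
      ext ψ; simp [hA, Set.mem_iInter]
    rw [this]
    refine isClosed_iInter fun g => isClosed_le ?_ continuous_const
    exact ((ContinuousLinearMap.apply ℝ ℝ (T2 g)).continuous).abs
  have hconv : ∀ n, Convex ℝ (A n) := by
    intro n ψ hψ χ hχ a b ha hb hab
    intro g
    have h1 := hψ g
    have h2' := hχ g
    have hφg : (0:ℝ) ≤ φ |g| := hφpos _ (abs_nonneg g)
    have : (a • ψ + b • χ) (T2 g) = a * ψ (T2 g) + b * χ (T2 g) := by
      simp [ContinuousLinearMap.add_apply, ContinuousLinearMap.smul_apply, smul_eq_mul]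
    rw [this]
    calc |a * ψ (T2 g) + b * χ (T2 g)| ≤ |a * ψ (T2 g)| + |b * χ (T2 g)| := abs_add_le _ _
      _ = a * |ψ (T2 g)| + b * |χ (T2 g)| := by
          rw [abs_mul, abs_mul, abs_of_nonneg ha, abs_of_nonneg hb]
      _ ≤ a * ((n:ℝ) * φ |g|) + b * ((n:ℝ) * φ |g|) := by
          exact add_le_add (mul_le_mul_of_nonneg_left h1 ha) (mul_le_mul_of_nonneg_left h2' hb)
      _ = (n:ℝ) * φ |g| := by rw [← add_mul, hab, one_mul]
  have hsym : ∀ n (ψ : E →L[ℝ] ℝ), ψ ∈ A n → -ψ ∈ A n := by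
    intro n ψ hψ g
    simpa using hψ g
  have hun : ∀ ψ, ∃ n, ψ ∈ A n := by
    intro ψ
    obtain ⟨c, hc, hb'⟩ := h2 ψ
    refine ⟨⌈c⌉₊, fun g => (hb' g |g| le_rfl).trans ?_⟩
    have hφg : (0:ℝ) ≤ φ |g| := hφpos _ (abs_nonneg g)
    exact mul_le_mul_of_nonneg_right (Nat.le_ceil c) hφg
  obtain ⟨n, r, hr, hball⟩ := baire_convex_symm A hcl hconv hsym hun
  refine ⟨(2 * (n:ℝ) + 1) / r, by positivity, fun g => ?_⟩
  have hkey : ∀ ψ : E →L[ℝ] ℝ, ‖ψ‖ ≤ 1 → |ψ (T2 g)| ≤ 2 * (n:ℝ) / r * φ |g| := by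
    intro ψ hψ
    have hmem : (r / 2) • ψ ∈ A n := by
      apply hball
      rw [Metric.mem_ball, dist_zero_right]
      have hle : ‖(r / 2) • ψ‖ ≤ r / 2 * 1 := by
        refine (norm_smul_le (r/2) ψ).trans ?_
        rw [Real.norm_eq_abs, abs_of_pos (by positivity : (0:ℝ) < r / 2)]
        exact mul_le_mul_of_nonneg_left hψ (by positivity)
      nlinarith
    have := hmem g
    rw [ContinuousLinearMap.smul_apply, smul_eq_mul, abs_mul,
      abs_of_pos (by positivity : (0:ℝ) < r / 2)] at this
    rw [div_mul_eq_mul_div, le_div_iff₀ hr]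
    nlinarith
  obtain ⟨ψ0, hψ0, heq0⟩ := exists_dual_vector'' ℝ (T2 g)
  have heq : ψ0 (T2 g) = ‖T2 g‖ := by simpa using heq0
  have hφg : (0:ℝ) ≤ φ |g| := hφpos _ (abs_nonneg g)
  have : ‖T2 g‖ ≤ 2 * (n:ℝ) / r * φ |g| := by
    rw [← heq]
    exact (le_abs_self _).trans (hkey ψ0 hψ0)
  refine this.trans ?_
  apply mul_le_mul_of_nonneg_right _ hφg
  rw [div_le_div_iff₀ hr hr]
  nlinarith

/-- Theorem 3.5: uniform eventual domination of semigroups.  Here `T t = e^{tA}` and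
`S t = e^{tB}` are (real) `C₀`-semigroups on a Banach lattice `E`, `u ≥ 0` is a
quasi-interior point and `φ` a strictly positive functional.  Condition (a) for the dual
semigroup, `e^{t₂ A'} E' ⊆ (E')_φ`, is expressed by the modulus estimate
`|⟨ψ ∘ e^{t₂ A}, ·⟩| ≤ c_ψ φ` in the dual lattice. -/
theorem stmt8 {E : Type*} [NormedAddCommGroup E] [Lattice E] [HasSolidNorm E]
    [IsOrderedAddMonoid E] [NormedSpace ℝ E] [CompleteSpace E]
    (u : E) (hu : 0 ≤ u) (huq : Dense {x : E | InPrincipalIdeal u x})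
    (φ : E →L[ℝ] ℝ) (hφpos : ∀ f : E, 0 ≤ f → 0 ≤ φ f)
    (hφstrict : ∀ f : E, 0 ≤ f → f ≠ 0 → 0 < φ f)
    (T S : ℝ → E →L[ℝ] E)
    (hT0 : T 0 = 1) (hS0 : S 0 = 1)
    (hTsemi : ∀ s t : ℝ, 0 ≤ s → 0 ≤ t → T (s + t) = (T s).comp (T t))
    (hSsemi : ∀ s t : ℝ, 0 ≤ s → 0 ≤ t → S (s + t) = (S s).comp (S t))
    (hTcont : ∀ f : E, ContinuousOn (fun t => T t f) (Set.Ici 0))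
    (hScont : ∀ f : E, ContinuousOn (fun t => S t f) (Set.Ici 0))
    -- (a) smoothing: `e^{t₁ A} E ⊆ E_u` and `e^{t₂ A'} E' ⊆ (E')_φ`:
    (ha1 : ∃ t1 ≥ (0:ℝ), ∀ f : E, InPrincipalIdeal u (T t1 f))
    (ha2 : ∃ t2 ≥ (0:ℝ), ∀ ψ : E →L[ℝ] ℝ, ∃ c > (0:ℝ),
      ∀ g f : E, |g| ≤ f → |ψ (T t2 g)| ≤ c * φ f)
    -- (b) uniform eventual strong positivity of `(e^{tB})`: `e^{tB} ≥ c (u ⊗ φ)`: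
    (hb : ∃ t3 ≥ (0:ℝ), ∃ c > (0:ℝ), ∀ t ≥ t3, ∀ f : E, 0 ≤ f → (c * φ f) • u ≤ S t f)
    -- (c) `(e^{tA})` converges to `0` in operator norm:
    (hc : Tendsto (fun t => ‖T t‖) atTop (𝓝 0)) :
    ∃ τ ≥ (0:ℝ), ∃ c' > (0:ℝ), ∀ t ≥ τ, ∀ f : E,
      (c' * φ |f|) • u ≤ S t |f| - |T t f| ∧ |T t f| ≤ S t |f| := by
  obtain ⟨t1, ht1, h1⟩ := ha1
  obtain ⟨t2, ht2, h2⟩ := ha2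
  obtain ⟨t3, ht3, c, hcpos, hb'⟩ := hb
  obtain ⟨C1, hC1, H1⟩ := uniform_ideal_bound u hu (T t1) h1
  obtain ⟨C2, hC2, H2⟩ := uniform_dual_bound φ hφpos (T t2) h2
  set ε := c / (2 * C1 * C2) with hε
  have hεpos : 0 < ε := by positivity
  obtain ⟨s0, hs0⟩ := (eventually_atTop.1 (hc.eventually (gt_mem_nhds hεpos)))
  set τ := max (t1 + t2 + max s0 0) t3 with hτ
  refine ⟨τ, le_trans ht3 (le_max_right _ _), c / 2, by positivity, fun t ht f => ?_⟩
  have hφf : (0:ℝ) ≤ φ |f| := hφpos _ (abs_nonneg f)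
  set s := t - t1 - t2 with hs
  have hss0 : max s0 0 ≤ s := by
    have := le_trans (le_max_left _ _) ht
    simp only [hs]; linarith
  have hsnn : 0 ≤ s := le_trans (le_max_right _ _) hss0
  have hTs : ‖T s‖ < ε := hs0 s (le_trans (le_max_left _ _) hss0)
  have hdecomp : T t = (T t1).comp ((T s).comp (T t2)) := by
    have e1 : t = t1 + (s + t2) := by simp only [hs]; ring
    rw [e1, hTsemi t1 (s + t2) ht1 (by linarith), hTsemi s t2 hsnn ht2]
  have keyT : |T t f| ≤ (c / 2 * φ |f|) • u := by
    have k1 : |T t f| ≤ (C1 * ‖(T s) ((T t2) f)‖) • u := by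
      rw [hdecomp]
      exact H1 _
    refine k1.trans (real_smul_mono_left ?_ hu)
    have k2 : ‖(T s) ((T t2) f)‖ ≤ ε * (C2 * φ |f|) := by
      calc ‖(T s) ((T t2) f)‖ ≤ ‖T s‖ * ‖(T t2) f‖ := (T s).le_opNorm _
        _ ≤ ε * (C2 * φ |f|) :=
            mul_le_mul hTs.le (H2 f) (norm_nonneg _) hεpos.le
    calc C1 * ‖(T s) ((T t2) f)‖ ≤ C1 * (ε * (C2 * φ |f|)) :=
          mul_le_mul_of_nonneg_left k2 hC1.le
      _ = c / 2 * φ |f| := by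
          rw [hε]
          field_simp
  have hbS : (c * φ |f|) • u ≤ S t |f| :=
    hb' t (le_trans (le_max_right _ _) ht) |f| (abs_nonneg f)
  have final1 : (c / 2 * φ |f|) • u ≤ S t |f| - |T t f| := by
    have hsub : (c * φ |f|) • u - (c / 2 * φ |f|) • u = (c / 2 * φ |f|) • u := by
      rw [← sub_smul]
      congr 1
      ring
    calc (c / 2 * φ |f|) • u = (c * φ |f|) • u - (c / 2 * φ |f|) • u := hsub.symm
      _ ≤ S t |f| - |T t f| := sub_le_sub hbS keyT
  refine ⟨final1, ?_⟩
  have hnn : (0:E) ≤ (c / 2 * φ |f|) • u :=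
    real_smul_nonneg (by positivity) hu
  exact sub_nonneg.1 (le_trans hnn final1)
end

section
/- On $E = C[0,1]$, define $\phi_A(f) = \int_0^1 f(x)\,dx$, $\phi_B(f) = 2\int_0^1 x f(x)\,dx$, $P_A = \mathbf{1} \otimes \phi_A$, $P_B = \mathbf{1} \otimes \phi_B$, and bounded operators $A = P_A - \tfrac{3}{2}\,\mathrm{id}$, $B = P_B - \mathrm{id}$. For $n \in \mathbb{N}$ let $f_n(x) = \max(1 - nx, 0)$. Then for each fixed $t > 0$ and all $n > \tfrac{2}{3} e^{t/2}$, the function $(e^{tB} - e^{tA}) f_n$ is not positive; specifically, $(e^{tB} - e^{tA}) f_n(1) = \left(\tfrac{1}{3n^2} - \tfrac{e^{-t/2}}{2n}\right)(1 - e^{-t}) < 0$. -/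
open Filter Topology intervalIntegral

noncomputable section

/-- The unit interval `[0,1]` as a subtype of `ℝ`. -/
abbrev I01 : Set ℝ := Set.Icc (0:ℝ) 1

/-- Projection of `ℝ` onto `[0,1]`. -/
noncomputable def pj : ℝ → I01 := Set.projIcc 0 1 zero_le_one

lemma pj_continuous : Continuous pj := continuous_projIcc

/-- The functional `φ_A(f) = ∫₀¹ f(x) dx` on `C[0,1]`. -/
noncomputable def phiA : C(I01, ℝ) →L[ℝ] ℝ :=
  LinearMap.mkContinuous
    { toFun := fun f => ∫ x in (0:ℝ)..1, f (pj x)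
      map_add' := by
        intro f g
        show (∫ x in (0:ℝ)..1, (f + g) (pj x))
            = (∫ x in (0:ℝ)..1, f (pj x)) + ∫ x in (0:ℝ)..1, g (pj x)
        simp_rw [ContinuousMap.add_apply]
        exact intervalIntegral.integral_add
          ((f.continuous.comp pj_continuous : Continuous fun x : ℝ => f (pj x)).intervalIntegrable 0 1)
          ((g.continuous.comp pj_continuous : Continuous fun x : ℝ => g (pj x)).intervalIntegrable 0 1)
      map_smul' := by
        intro c f
        show (∫ x in (0:ℝ)..1, (c • f) (pj x)) = c • ∫ x in (0:ℝ)..1, f (pj x)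
        simp_rw [ContinuousMap.smul_apply]
        exact intervalIntegral.integral_smul c (fun x => f (pj x)) }
    1
    (by
      intro f
      simp only [LinearMap.coe_mk, AddHom.coe_mk, one_mul]
      calc ‖∫ x in (0:ℝ)..1, f (pj x)‖
          ≤ ‖f‖ * |(1:ℝ) - 0| := by
            apply intervalIntegral.norm_integral_le_of_norm_le_const
            intro x _
            exact f.norm_coe_le_norm _
        _ = ‖f‖ := by simp)

/-- The functional `φ_B(f) = 2 ∫₀¹ x f(x) dx` on `C[0,1]`. -/
noncomputable def phiB : C(I01, ℝ) →L[ℝ] ℝ :=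
  LinearMap.mkContinuous
    { toFun := fun f => 2 * ∫ x in (0:ℝ)..1, x * f (pj x)
      map_add' := by
        intro f g
        show 2 * (∫ x in (0:ℝ)..1, x * (f + g) (pj x))
            = 2 * (∫ x in (0:ℝ)..1, x * f (pj x)) + 2 * ∫ x in (0:ℝ)..1, x * g (pj x)
        simp_rw [ContinuousMap.add_apply, mul_add]
        have hf : IntervalIntegrable (fun x : ℝ => x * f (pj x)) MeasureTheory.volume 0 1 :=
          (continuous_id.mul (f.continuous.comp pj_continuous)).intervalIntegrable 0 1
        have hg : IntervalIntegrable (fun x : ℝ => x * g (pj x)) MeasureTheory.volume 0 1 :=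
          (continuous_id.mul (g.continuous.comp pj_continuous)).intervalIntegrable 0 1
        rw [intervalIntegral.integral_add hf hg]
        ring
      map_smul' := by
        intro c f
        show 2 * (∫ x in (0:ℝ)..1, x * (c • f) (pj x)) = c • (2 * ∫ x in (0:ℝ)..1, x * f (pj x))
        have h : (fun x : ℝ => x * (c • f) (pj x)) = fun x : ℝ => c * (x * f (pj x)) := by
          funext x
          simp only [ContinuousMap.smul_apply, smul_eq_mul]
          ring
        rw [h, intervalIntegral.integral_const_mul]
        simp only [smul_eq_mul]
        ring }
    2
    (by
      intro f
      simp only [LinearMap.coe_mk, AddHom.coe_mk, norm_mul, Real.norm_ofNat]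
      have h : ‖∫ x in (0:ℝ)..1, x * f (pj x)‖ ≤ ‖f‖ * |(1:ℝ) - 0| := by
        apply intervalIntegral.norm_integral_le_of_norm_le_const
        intro x hx
        rw [Set.uIoc_of_le (by norm_num : (0:ℝ) ≤ 1)] at hx
        have hx0 : |x| ≤ 1 := by
          rw [abs_le]
          constructor <;> [linarith [hx.1]; linarith [hx.2]]
        calc ‖x * f (pj x)‖ = |x| * ‖f (pj x)‖ := by simp [abs_mul]
          _ ≤ 1 * ‖f‖ :=
              mul_le_mul hx0 (f.norm_coe_le_norm _) (norm_nonneg _) zero_le_one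
          _ = ‖f‖ := one_mul _
      rw [abs_of_nonneg (by norm_num : (0:ℝ) ≤ 1 - 0)] at h
      nlinarith [norm_nonneg f])

/-- The rank-one projection `P_A = 𝟏 ⊗ φ_A`. -/
noncomputable def PA : C(I01, ℝ) →L[ℝ] C(I01, ℝ) := phiA.smulRight 1

/-- The rank-one projection `P_B = 𝟏 ⊗ φ_B`. -/
noncomputable def PB : C(I01, ℝ) →L[ℝ] C(I01, ℝ) := phiB.smulRight 1

/-- The operator `A = P_A - (3/2) id`. -/
noncomputable def opA : C(I01, ℝ) →L[ℝ] C(I01, ℝ) := PA - (3/2 : ℝ) • 1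

/-- The operator `B = P_B - id`. -/
noncomputable def opB : C(I01, ℝ) →L[ℝ] C(I01, ℝ) := PB - 1

/-- The exponential `e^M` of a bounded operator `M` on `C[0,1]`, via the entire
functional calculus `NormedSpace.exp` in the Banach algebra of bounded operators
(with its norm topology). -/
noncomputable def expOp (M : C(I01, ℝ) →L[ℝ] C(I01, ℝ)) : C(I01, ℝ) →L[ℝ] C(I01, ℝ) :=
  letI : TopologicalSpace (C(I01,ℝ) →L[ℝ] C(I01,ℝ)) := UniformSpace.toTopologicalSpace
  letI : IsTopologicalRing (C(I01,ℝ) →L[ℝ] C(I01,ℝ)) := by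
    exact @NonUnitalSeminormedRing.toIsTopologicalRing (C(I01,ℝ) →L[ℝ] C(I01,ℝ)) inferInstance
  NormedSpace.exp M

/-- The hat function `f_n(x) = max(1 - nx, 0)`. -/
noncomputable def hatFn (n : ℕ) : C(I01, ℝ) :=
  ⟨fun x => max (1 - n * (x : ℝ)) 0,
    (continuous_const.sub (continuous_const.mul continuous_subtype_val)).max continuous_const⟩

section Aux
set_option linter.unusedSectionVars false

variable {A : Type*} [NormedRing A] [NormedAlgebra ℝ A] [CompleteSpace A]

lemma my_exp_smul_idem (Q : A) (hQ : Q * Q = Q) (t : ℝ) :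
    NormedSpace.exp (t • Q) = 1 + (Real.exp t - 1) • Q := by
  have hpow : ∀ n : ℕ, Q ^ (n + 1) = Q := by
    intro n
    induction n with
    | zero => simp
    | succ k ih => rw [pow_succ, ih, hQ]
  have hsum : Summable (fun n : ℕ => ((Nat.factorial n : ℝ))⁻¹ • (t • Q) ^ n) :=
    NormedSpace.expSeries_summable' (𝕂 := ℝ) (t • Q)
  have hs : Summable (fun n : ℕ => t ^ (n + 1) / (Nat.factorial (n+1))) := by
    have h := Real.summable_pow_div_factorial t
    exact_mod_cast (summable_nat_add_iff 1).mpr h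
  have hexp : Real.exp t = 1 + ∑' n : ℕ, t ^ (n + 1) / (Nat.factorial (n+1)) := by
    have hsum2 : Summable (fun n : ℕ => t ^ n / Nat.factorial n) := Real.summable_pow_div_factorial t
    rw [Real.exp_eq_exp_ℝ, NormedSpace.exp_eq_tsum_div]
    beta_reduce
    rw [Summable.tsum_eq_zero_add hsum2]
    simp
  have h1 : ∀ n : ℕ, (((Nat.factorial (n+1)) : ℝ))⁻¹ • (t • Q) ^ (n + 1) = (t ^ (n + 1) / (Nat.factorial (n+1))) • Q := by
    intro n
    rw [smul_pow, hpow, smul_smul]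
    congr 1
    field_simp
  rw [NormedSpace.exp_eq_tsum ℝ]
  beta_reduce
  rw [Summable.tsum_eq_zero_add hsum]
  simp only [h1, pow_zero, Nat.factorial_zero, Nat.cast_one, inv_one, one_smul]
  rw [Summable.tsum_smul_const hs, hexp]
  ring_nf

lemma my_exp_smul_one (c : ℝ) : NormedSpace.exp (c • (1 : A)) = Real.exp c • (1 : A) := by
  rw [← Algebra.algebraMap_eq_smul_one, ← NormedSpace.algebraMap_exp_comm,
    ← Real.exp_eq_exp_ℝ, Algebra.algebraMap_eq_smul_one]

lemma my_exp_proj_sub (Q : A) (hQ : Q * Q = Q) (α t : ℝ) :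
    NormedSpace.exp (t • (Q - α • 1)) =
      Real.exp (-(α * t)) • (1 : A) + (Real.exp (-(α * t)) * (Real.exp t - 1)) • Q := by
  have h : t • (Q - α • (1 : A)) = t • Q + (-(α * t)) • (1 : A) := by
    rw [smul_sub, smul_smul, mul_comm t α, neg_smul, sub_eq_add_neg]
  have hc : Commute (t • Q) ((-(α * t)) • (1 : A)) :=
    ((Commute.one_right Q).smul_left t).smul_right _
  rw [h, NormedSpace.exp_add_of_commute_of_mem_ball (𝕂 := ℝ) hc
    ((NormedSpace.expSeries_radius_eq_top ℝ A).symm ▸ edist_lt_top _ _)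
    ((NormedSpace.expSeries_radius_eq_top ℝ A).symm ▸ edist_lt_top _ _), my_exp_smul_idem Q hQ t, my_exp_smul_one]
  rw [add_mul, one_mul, smul_mul_smul_comm, mul_one, mul_comm (Real.exp t - 1)]

end Aux

lemma pj_coe {x : ℝ} (hx : x ∈ I01) : ((pj x : I01) : ℝ) = x := by
  simp only [pj]
  rw [Set.projIcc_of_mem _ hx]

lemma hat_pj (n : ℕ) {x : ℝ} (hx : x ∈ I01) :
    hatFn n (pj x) = max (1 - (n : ℝ) * x) 0 := by
  show max (1 - (n:ℝ) * ((pj x : I01) : ℝ)) 0 = _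
  rw [pj_coe hx]

lemma phiA_one : phiA (1 : C(I01, ℝ)) = 1 := by
  show (∫ x in (0:ℝ)..1, (1 : C(I01,ℝ)) (pj x)) = 1
  simp

lemma phiB_one : phiB (1 : C(I01, ℝ)) = 1 := by
  show 2 * (∫ x in (0:ℝ)..1, x * (1 : C(I01,ℝ)) (pj x)) = 1
  simp only [ContinuousMap.one_apply, mul_one, integral_id]
  norm_num

lemma PA_idem : PA * PA = PA := by
  refine ContinuousLinearMap.ext fun f => ?_
  rw [ContinuousLinearMap.mul_apply]
  simp [PA, map_smul, phiA_one, smul_smul]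

lemma PB_idem : PB * PB = PB := by
  refine ContinuousLinearMap.ext fun f => ?_
  rw [ContinuousLinearMap.mul_apply]
  simp [PB, map_smul, phiB_one, smul_smul]

lemma phiA_hat (n : ℕ) (hn : 1 ≤ n) : phiA (hatFn n) = 1 / (2 * n) := by
  have hn0 : (0:ℝ) < n := by exact_mod_cast hn
  set a : ℝ := 1 / n with ha
  have ha0 : 0 < a := by positivity
  have ha1 : a ≤ 1 := by
    rw [ha, div_le_one hn0]; exact_mod_cast hn
  have hna : (n : ℝ) * a = 1 := by rw [ha, mul_one_div, div_self hn0.ne']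
  have hcont : Continuous (fun x : ℝ => (hatFn n) (pj x)) :=
    (hatFn n).continuous.comp pj_continuous
  show (∫ x in (0:ℝ)..1, (hatFn n) (pj x)) = 1 / (2 * n)
  rw [← intervalIntegral.integral_add_adjacent_intervals
    (hcont.intervalIntegrable 0 a) (hcont.intervalIntegrable a 1)]
  have h1 : (∫ x in (0:ℝ)..a, (hatFn n) (pj x)) = ∫ x in (0:ℝ)..a, (1 - (n:ℝ) * x) := by
    apply intervalIntegral.integral_congr
    intro x hx
    beta_reduce
    rw [Set.uIcc_of_le ha0.le] at hx
    rw [hat_pj n ⟨hx.1, hx.2.trans ha1⟩]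
    apply max_eq_left
    nlinarith [hx.2, hx.1]
  have h2 : (∫ x in a..1, (hatFn n) (pj x)) = 0 := by
    rw [← intervalIntegral.integral_zero (a := a) (b := (1:ℝ)) (E := ℝ)]
    apply intervalIntegral.integral_congr
    intro x hx
    beta_reduce
    rw [Set.uIcc_of_le ha1] at hx
    rw [hat_pj n ⟨ha0.le.trans hx.1, hx.2⟩]
    apply max_eq_right
    nlinarith [hx.1]
  rw [h1, h2, add_zero]
  rw [intervalIntegral.integral_sub (intervalIntegrable_const)
    ((by fun_prop : Continuous fun x : ℝ => (n:ℝ) * x).intervalIntegrable 0 a),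
    intervalIntegral.integral_const, intervalIntegral.integral_const_mul,
    integral_id]
  field_simp [ha]
  linear_combination (1 - (n:ℝ)*a) * hna

lemma phiB_hat (n : ℕ) (hn : 1 ≤ n) : phiB (hatFn n) = 1 / (3 * n ^ 2) := by
  have hn0 : (0:ℝ) < n := by exact_mod_cast hn
  set a : ℝ := 1 / n with ha
  have ha0 : 0 < a := by positivity
  have ha1 : a ≤ 1 := by
    rw [ha, div_le_one hn0]; exact_mod_cast hn
  have hna : (n : ℝ) * a = 1 := by rw [ha, mul_one_div, div_self hn0.ne']
  have hcont : Continuous (fun x : ℝ => x * (hatFn n) (pj x)) :=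
    continuous_id.mul ((hatFn n).continuous.comp pj_continuous)
  show 2 * (∫ x in (0:ℝ)..1, x * (hatFn n) (pj x)) = 1 / (3 * n ^ 2)
  rw [← intervalIntegral.integral_add_adjacent_intervals
    (hcont.intervalIntegrable 0 a) (hcont.intervalIntegrable a 1)]
  have h1 : (∫ x in (0:ℝ)..a, x * (hatFn n) (pj x))
      = ∫ x in (0:ℝ)..a, (x - (n:ℝ) * x ^ 2) := by
    apply intervalIntegral.integral_congr
    intro x hx
    beta_reduce
    rw [Set.uIcc_of_le ha0.le] at hx
    rw [hat_pj n ⟨hx.1, hx.2.trans ha1⟩]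
    rw [max_eq_left (by nlinarith [hx.2, hx.1, hna, hn0])]
    ring
  have h2 : (∫ x in a..1, x * (hatFn n) (pj x)) = 0 := by
    rw [← intervalIntegral.integral_zero (a := a) (b := (1:ℝ)) (E := ℝ)]
    apply intervalIntegral.integral_congr
    intro x hx
    beta_reduce
    rw [Set.uIcc_of_le ha1] at hx
    rw [hat_pj n ⟨ha0.le.trans hx.1, hx.2⟩]
    rw [max_eq_right (by nlinarith [hx.1, hna, hn0])]
    ring
  rw [h1, h2, add_zero]
  rw [intervalIntegral.integral_sub
    ((by fun_prop : Continuous fun x : ℝ => x).intervalIntegrable 0 a)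
    ((by fun_prop : Continuous fun x : ℝ => (n:ℝ) * x ^ 2).intervalIntegrable 0 a),
    integral_id, intervalIntegral.integral_const_mul,
    integral_pow]
  field_simp [ha]
  linear_combination (-3*((n:ℝ)*a-1)*(2*(n:ℝ)*a+1)) * hna

noncomputable local instance instTRCLM : IsTopologicalRing (C(I01,ℝ) →L[ℝ] C(I01,ℝ)) :=
  @NonUnitalSeminormedRing.toIsTopologicalRing (C(I01,ℝ) →L[ℝ] C(I01,ℝ)) inferInstance

lemma expOp_eq_exp (M : C(I01, ℝ) →L[ℝ] C(I01, ℝ)) : expOp M = NormedSpace.exp M := rfl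

lemma expOpA (t : ℝ) : expOp (t • opA)
    = Real.exp (-(3/2 * t)) • 1 + (Real.exp (-(3/2 * t)) * (Real.exp t - 1)) • PA := by
  have h : opA = PA - (3/2 : ℝ) • 1 := rfl
  rw [expOp_eq_exp, h, my_exp_proj_sub PA PA_idem (3/2) t]

lemma expOpB (t : ℝ) : expOp (t • opB)
    = Real.exp (-t) • 1 + (Real.exp (-t) * (Real.exp t - 1)) • PB := by
  have h : opB = PB - (1:ℝ) • 1 := by rw [one_smul]; rfl
  rw [expOp_eq_exp, h, my_exp_proj_sub PB PB_idem 1 t, one_mul]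

/-- The example showing that individual eventual domination does not imply uniform
eventual domination: for each fixed `t > 0` and all `n > (2/3) e^{t/2}`, the function
`(e^{tB} - e^{tA}) f_n` takes the strictly negative value
`(1/(3n²) - e^{-t/2}/(2n))(1 - e^{-t})` at the point `1`; in particular it is not
positive. -/
theorem stmt9 (t : ℝ) (ht : 0 < t) (n : ℕ) (hn : (2/3 : ℝ) * Real.exp (t/2) < n) :
    ((expOp (t • opB) - expOp (t • opA)) (hatFn n))
        ⟨1, Set.right_mem_Icc.mpr zero_le_one⟩
      = (1/(3*(n:ℝ)^2) - Real.exp (-t/2)/(2*(n:ℝ))) * (1 - Real.exp (-t)) ∧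
    ((expOp (t • opB) - expOp (t • opA)) (hatFn n))
        ⟨1, Set.right_mem_Icc.mpr zero_le_one⟩ < 0 ∧
    ¬ (0 ≤ (expOp (t • opB) - expOp (t • opA)) (hatFn n)) := by
  set p : I01 := ⟨1, Set.right_mem_Icc.mpr zero_le_one⟩
  have hexp2 : (0:ℝ) < Real.exp (t/2) := Real.exp_pos _
  have hn1 : 1 ≤ n := by
    by_contra h
    push_neg at h
    interval_cases n
    · simp at hn; nlinarith
  have hnR : (1:ℝ) ≤ n := by exact_mod_cast hn1
  have hhat1 : hatFn n p = 0 := by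
    show max (1 - (n:ℝ) * ((p : I01) : ℝ)) 0 = 0
    apply max_eq_right
    simp only [p]
    nlinarith
  have hval : ((expOp (t • opB) - expOp (t • opA)) (hatFn n)) p
      = (1/(3*(n:ℝ)^2) - Real.exp (-t/2)/(2*(n:ℝ))) * (1 - Real.exp (-t)) := by
    rw [ContinuousLinearMap.sub_apply, expOpA, expOpB]
    simp only [ContinuousLinearMap.add_apply, ContinuousLinearMap.smul_apply,
      ContinuousLinearMap.one_apply, PA, PB, ContinuousLinearMap.smulRight_apply,
      phiA_hat n hn1, phiB_hat n hn1]
    simp only [ContinuousMap.sub_apply, ContinuousMap.add_apply, ContinuousMap.smul_apply,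
      ContinuousMap.one_apply, hhat1, smul_eq_mul, mul_zero, zero_add, mul_one]
    have h1 : Real.exp (-t) * Real.exp t = 1 := by
      rw [← Real.exp_add, show -t + t = 0 by ring, Real.exp_zero]
    have h2 : Real.exp (-(3/2 * t)) = Real.exp (-t/2) * Real.exp (-t) := by
      rw [← Real.exp_add]; ring_nf
    rw [h2]
    linear_combination (1/(3*(n:ℝ)^2) - Real.exp (-t/2)/(2*(n:ℝ))) * h1
  refine ⟨hval, ?_, ?_⟩
  · rw [hval]
    apply mul_neg_of_neg_of_pos
    · have hu : Real.exp (-t/2) * Real.exp (t/2) = 1 := by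
        rw [← Real.exp_add, show -t/2 + t/2 = 0 by ring, Real.exp_zero]
      have hu0 : 0 < Real.exp (-t/2) := Real.exp_pos _
      have hN : (0:ℝ) < n := by linarith
      rw [sub_neg, div_lt_div_iff₀ (by positivity) (by positivity)]
      nlinarith [mul_lt_mul_of_pos_left hn hu0]
    · have : Real.exp (-t) < 1 := Real.exp_lt_one_iff.mpr (by linarith)
      linarith
  · intro h
    have h2 := ContinuousMap.le_def.mp h p
    rw [ContinuousMap.zero_apply] at h2
    rw [hval] at h2
    have hu : Real.exp (-t/2) * Real.exp (t/2) = 1 := by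
      rw [← Real.exp_add, show -t/2 + t/2 = 0 by ring, Real.exp_zero]
    have hu0 : 0 < Real.exp (-t/2) := Real.exp_pos _
    have hN : (0:ℝ) < n := by linarith
    have hfac : 1/(3*(n:ℝ)^2) - Real.exp (-t/2)/(2*(n:ℝ)) < 0 := by
      rw [sub_neg, div_lt_div_iff₀ (by positivity) (by positivity)]
      nlinarith [mul_lt_mul_of_pos_left hn hu0]
    have hpos : 0 < 1 - Real.exp (-t) := by
      have : Real.exp (-t) < 1 := Real.exp_lt_one_iff.mpr (by linarith)
      linarith
    nlinarith [mul_neg_of_neg_of_pos hfac hpos]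


end
end

section
/- Let $u_1(x) = \cos(\tfrac{\pi}{2}x)$ and $u_2(x) = \sin(\tfrac{\pi}{2}x)$ on $(-1,1)$, and let $P = c(u_1 \otimes u_1 + u_2 \otimes u_2)$ (with normalisation constant $c = 1$, since $\|u_1\|_{L^2}^2 = \|u_2\|_{L^2}^2 = 1$) be the orthogonal projection in $L^2(-1,1)$ onto $\mathrm{span}\{u_1, u_2\}$. Then $P$ is not a positive operator: for the indicator function $f = \mathbf{1}_{(0,1)}$, the function $Pf$ takes strictly negative values at points $x$ sufficiently close to $-1$. -/
open Real Set

lemma pi2ne : (π/2 : ℝ) ≠ 0 := by positivity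

lemma int_cos_sq' : (∫ x in (-1:ℝ)..1, Real.cos (π/2 * x)^2) = 1 := by
  rw [intervalIntegral.integral_comp_mul_left (fun y => Real.cos y ^ 2) pi2ne]
  rw [integral_cos_sq]
  rw [show (π/2 : ℝ) * -1 = -(π/2) by ring, show (π/2:ℝ) * 1 = π/2 by ring]
  simp [Real.cos_pi_div_two, smul_eq_mul]

lemma int_sin_sq' : (∫ x in (-1:ℝ)..1, Real.sin (π/2 * x)^2) = 1 := by
  rw [intervalIntegral.integral_comp_mul_left (fun y => Real.sin y ^ 2) pi2ne]
  rw [integral_sin_sq]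
  rw [show (π/2 : ℝ) * -1 = -(π/2) by ring, show (π/2:ℝ) * 1 = π/2 by ring]
  simp [Real.cos_pi_div_two, smul_eq_mul]

lemma int_cos' : (∫ y in (0:ℝ)..1, Real.cos (π/2 * y)) = 2/π := by
  rw [intervalIntegral.integral_comp_mul_left (fun y => Real.cos y) pi2ne, integral_cos]
  simp [smul_eq_mul]

lemma int_sin' : (∫ y in (0:ℝ)..1, Real.sin (π/2 * y)) = 2/π := by
  rw [intervalIntegral.integral_comp_mul_left (fun y => Real.sin y) pi2ne, integral_sin]
  simp [smul_eq_mul, Real.cos_pi_div_two]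

lemma neg_near : ∀ t ∈ Ioo (-(π/2)) (-(π/4)), Real.cos t + Real.sin t < 0 := by
  intro t ht
  obtain ⟨h1', h2'⟩ := ht
  have hp := pi_pos
  have h1 : Real.sin t < Real.sin (-(π/4)) := by
    apply Real.strictMonoOn_sin ⟨h1'.le, by nlinarith⟩ ⟨by nlinarith, by nlinarith⟩ h2'
  have h2 : Real.cos t < Real.sin (π/4) := by
    rw [show Real.cos t = Real.sin (t + π/2) by rw [Real.sin_add_pi_div_two]]
    apply Real.strictMonoOn_sin ⟨by nlinarith, by nlinarith⟩ ⟨by nlinarith, by nlinarith⟩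
      (by nlinarith)
  have : Real.sin (-(π/4)) = - Real.sin (π/4) := Real.sin_neg _
  linarith

lemma key : ∀ x ∈ Ioo (-1:ℝ) (-1 + 1/2),
    (∫ y in (0:ℝ)..1, Real.cos (π/2 * y)) * Real.cos (π/2 * x)
      + (∫ y in (0:ℝ)..1, Real.sin (π/2 * y)) * Real.sin (π/2 * x) < 0 := by
  intro x hx
  have hp := pi_pos
  have ht : (π/2) * x ∈ Ioo (-(π/2)) (-(π/4)) :=
    ⟨by nlinarith [hx.1], by nlinarith [hx.2]⟩
  have := neg_near _ ht
  rw [int_cos', int_sin']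
  have h2π : (0:ℝ) < 2/π := by positivity
  nlinarith

/-- The orthogonal projection `P = u₁ ⊗ u₁ + u₂ ⊗ u₂` in `L²(-1,1)` onto the span of
`u₁(x) = cos(πx/2)` and `u₂(x) = sin(πx/2)` (which are normalised in `L²(-1,1)`) is not
positive: for `f = 𝟙_{(0,1)}`, the function
`Pf(x) = ⟨u₁, f⟩ u₁(x) + ⟨u₂, f⟩ u₂(x)` is strictly negative for `x` close to `-1`. -/
theorem stmt12 :
    -- normalisation: ‖u₁‖₂² = ‖u₂‖₂² = 1
    (∫ x in (-1:ℝ)..1, Real.cos (π/2 * x)^2) = 1 ∧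
    (∫ x in (-1:ℝ)..1, Real.sin (π/2 * x)^2) = 1 ∧
    -- Pf takes strictly negative values near -1 (f = 𝟙_{(0,1)}, so ⟨uᵢ, f⟩ = ∫₀¹ uᵢ)
    (∃ δ > (0:ℝ), ∀ x ∈ Ioo (-1:ℝ) (-1 + δ),
      (∫ y in (0:ℝ)..1, Real.cos (π/2 * y)) * Real.cos (π/2 * x)
        + (∫ y in (0:ℝ)..1, Real.sin (π/2 * y)) * Real.sin (π/2 * x) < 0) ∧
    -- hence Pf is not a positive function on (-1,1)
    ¬ (∀ x ∈ Ioo (-1:ℝ) 1,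
      0 ≤ (∫ y in (0:ℝ)..1, Real.cos (π/2 * y)) * Real.cos (π/2 * x)
        + (∫ y in (0:ℝ)..1, Real.sin (π/2 * y)) * Real.sin (π/2 * x)) := by
  refine ⟨int_cos_sq', int_sin_sq', ⟨1/2, by norm_num, key⟩, ?_⟩
  intro h
  have h1 := h (-3/4) (by norm_num)
  have h2 := key (-3/4) (by norm_num)
  linarith
end
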